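/- arXiv:1807.03368 — 9 statements merged into one kernel-verified Lean document; each statement's English description precedes it below -/
import Mathlib

section
/- If d is a pseudometric on a set Ω, then the Fermat distance d_F(A_1,...,A_n) = inf_{B ∈ Ω} Σ_{i=1}^n d(A_i, B) satisfies the generalized triangle inequality: d_F(A_1,...,A_n) ≤ Σ_{i=1}^n d_F(A_1,...,A_{i-1},A_{n+1},A_{i+1},...,A_n) for any A_1,...,A_{n+1} ∈ Ω (assuming all the infima are attained). -/
/-- If `d` is a pseudometric on `Ω` and `dF` is the (attained) Fermat distance
`dF A = min_{B ∈ Ω} ∑ i, d (A i) B`, then `dF` satisfies the generalized triangle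
inequality. -/
theorem fermat_generalized_triangle {Ω : Type*} (d : Ω → Ω → ℝ)
    (hnonneg : ∀ A B, 0 ≤ d A B)
    (hself : ∀ A, d A A = 0)
    (hsymm : ∀ A B, d A B = d B A)
    (htri : ∀ A B C, d A C ≤ d A B + d B C)
    (n : ℕ) (dF : (Fin n → Ω) → ℝ)
    (hdF : ∀ A : Fin n → Ω, IsLeast {x : ℝ | ∃ B : Ω, x = ∑ i, d (A i) B} (dF A))
    (A : Fin n → Ω) (A' : Ω) :
    dF A ≤ ∑ i : Fin n, dF (Function.update A i A') := by
  have hdFnonneg : ∀ C : Fin n → Ω, 0 ≤ dF C := by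
    intro C
    obtain ⟨⟨B, hB⟩, -⟩ := hdF C
    rw [hB]
    exact Finset.sum_nonneg fun i _ => hnonneg _ _
  match n, dF, hdF, A with
  | 0, dF, hdF, A =>
    obtain ⟨⟨B, hB⟩, -⟩ := hdF A
    simp at hB
    simp [hB]
  | 1, dF, hdF, A =>
    have h0 : dF A ≤ 0 := (hdF A).2 ⟨A 0, by simp [hself]⟩
    calc dF A ≤ 0 := h0
    _ ≤ ∑ i : Fin 1, dF (Function.update A i A') :=
      Finset.sum_nonneg fun i _ => hdFnonneg _
  | (m + 2), dF, hdF, A =>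
    obtain ⟨⟨B₀, hB₀⟩, -⟩ := hdF (Function.update A 0 A')
    obtain ⟨⟨B₁, hB₁⟩, -⟩ := hdF (Function.update A 1 A')
    have h01 : (0 : Fin (m + 2)) ≠ 1 := Fin.zero_ne_one
    have h1 : dF A ≤ dF (Function.update A 0 A') + d (A 0) A' := by
      have hle : dF A ≤ ∑ j, d (A j) B₀ := (hdF A).2 ⟨B₀, rfl⟩
      have hsplit : ∑ j, d (A j) B₀ ≤ d (A 0) A' + ∑ j, d (Function.update A 0 A' j) B₀ := by
        rw [Fin.sum_univ_succ, Fin.sum_univ_succ (f := fun j => d (Function.update A 0 A' j) B₀)]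
        have heq : ∀ i : Fin (m + 1), Function.update A 0 A' i.succ = A i.succ := by
          intro i
          exact Function.update_of_ne (Fin.succ_ne_zero i) _ _
        simp only [heq, Function.update_self]
        have := htri (A 0) A' B₀
        linarith
      rw [hB₀] at *
      linarith
    have h2 : d (A 0) A' ≤ dF (Function.update A 1 A') := by
      rw [hB₁]
      have hsub : ({0, 1} : Finset (Fin (m + 2))) ⊆ Finset.univ := Finset.subset_univ _
      have hpair : ∑ j ∈ ({0, 1} : Finset (Fin (m + 2))),
          d (Function.update A 1 A' j) B₁ ≤ ∑ j, d (Function.update A 1 A' j) B₁ :=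
        Finset.sum_le_sum_of_subset_of_nonneg hsub fun i _ _ => hnonneg _ _
      rw [Finset.sum_pair h01] at hpair
      have e0 : Function.update A 1 A' (0 : Fin (m + 2)) = A 0 :=
        Function.update_of_ne h01 _ _
      have e1 : Function.update A 1 A' (1 : Fin (m + 2)) = A' := Function.update_self _ _ _
      rw [e0, e1] at hpair
      have := htri (A 0) B₁ A'
      have hs := hsymm A' B₁
      linarith
    have hpair2 : dF (Function.update A 0 A') + dF (Function.update A 1 A') ≤
        ∑ i : Fin (m + 2), dF (Function.update A i A') := by
      have hsub : ({0, 1} : Finset (Fin (m + 2))) ⊆ Finset.univ := Finset.subset_univ _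
      have := Finset.sum_le_sum_of_subset_of_nonneg hsub
        (fun i _ _ => hdFnonneg (Function.update A i A'))
      rwa [Finset.sum_pair h01] at this
    linarith
end

section
/- If d is a pseudometric on Ω, then the Fermat distance d_F(A_1,...,A_n) = min_{B∈Ω} Σ_i d(A_i,B) is a pseudo n-metric: it is non-negative, symmetric under any permutation of its arguments, satisfies d_F(A,...,A)=0, and satisfies the generalized triangle inequality d_F(A_{1:n}) ≤ Σ_{i=1}^n d_F(A^i_{1:n,n+1}). -/
/-- If `d` is a pseudometric on `Ω`, then the (attained) Fermat distance
`dF A = min_{B ∈ Ω} ∑ i, d (A i) B` is a pseudo `n`-metric: non-negative,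
permutation symmetric, `dF (A,...,A) = 0`, and the generalized triangle inequality. -/
theorem fermat_is_pseudo_n_metric {Ω : Type*} (d : Ω → Ω → ℝ)
    (hnonneg : ∀ A B, 0 ≤ d A B)
    (hself : ∀ A, d A A = 0)
    (hsymm : ∀ A B, d A B = d B A)
    (htri : ∀ A B C, d A C ≤ d A B + d B C)
    (n : ℕ) (dF : (Fin n → Ω) → ℝ)
    (hdF : ∀ A : Fin n → Ω, IsLeast {x : ℝ | ∃ B : Ω, x = ∑ i, d (A i) B} (dF A)) :
    (∀ A : Fin n → Ω, 0 ≤ dF A) ∧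
    (∀ (A : Fin n → Ω) (σ : Equiv.Perm (Fin n)), dF (A ∘ σ) = dF A) ∧
    (∀ A : Ω, dF (fun _ => A) = 0) ∧
    (∀ (A : Fin n → Ω) (A' : Ω),
      dF A ≤ ∑ i : Fin n, dF (Function.update A i A')) := by
  have hle : ∀ (A : Fin n → Ω) (B : Ω), dF A ≤ ∑ i, d (A i) B := by
    intro A B
    exact (hdF A).2 ⟨B, rfl⟩
  have hmem : ∀ A : Fin n → Ω, ∃ B : Ω, dF A = ∑ i, d (A i) B := fun A => (hdF A).1
  have hnn : ∀ A : Fin n → Ω, 0 ≤ dF A := by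
    intro A
    obtain ⟨B, hB⟩ := hmem A
    rw [hB]
    exact Finset.sum_nonneg fun i _ => hnonneg _ _
  refine ⟨hnn, ?_, ?_, ?_⟩
  · intro A σ
    obtain ⟨B, hB⟩ := hmem A
    obtain ⟨C, hC⟩ := hmem (A ∘ σ)
    apply le_antisymm
    · calc dF (A ∘ σ) ≤ ∑ i, d ((A ∘ σ) i) B := hle _ B
        _ = ∑ i, d (A i) B := Equiv.sum_comp σ (fun i => d (A i) B)
        _ = dF A := hB.symm
    · calc dF A ≤ ∑ i, d (A i) C := hle _ C
        _ = ∑ i, d ((A ∘ σ) i) C := (Equiv.sum_comp σ (fun i => d (A i) C)).symm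
        _ = dF (A ∘ σ) := hC.symm
  · intro A
    refine le_antisymm ?_ (hnn _)
    calc dF (fun _ => A) ≤ ∑ _i : Fin n, d A A := hle _ A
      _ = 0 := by simp [hself]
  · intro A A'
    clear hdF
    revert A A'
    revert dF hle hmem hnn
    rcases n with _ | _ | m <;> intro dF hle hmem hnn A A'
    · obtain ⟨B, hB⟩ := hmem A
      simp at hB ⊢
      simp [hB]
    · have h0 : dF A ≤ 0 := by
        calc dF A ≤ ∑ i, d (A i) (A 0) := hle A (A 0)
          _ = 0 := by simp [Fin.sum_univ_one, hself]
      refine h0.trans (Finset.sum_nonneg fun i _ => hnn _)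
    · set i : Fin (m + 2) := ⟨0, by omega⟩ with hi
      set k : Fin (m + 2) := ⟨1, by omega⟩ with hk
      have hik : i ≠ k := by simp [hi, hk, Fin.ext_iff]
      obtain ⟨Bi, hBi⟩ := hmem (Function.update A i A')
      obtain ⟨Bk, hBk⟩ := hmem (Function.update A k A')
      have hupd : ∀ (j : Fin (m + 2)) (B : Ω) (l : Fin (m + 2)),
          d (Function.update A j A' l) B
            = Function.update (fun l => d (A l) B) j (d A' B) l := by
        intro j B l
        exact Function.apply_update (fun l x => d x B) A j A' l
      have hsumi : dF (Function.update A i A')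
          = d A' Bi + ∑ l ∈ Finset.univ.erase i, d (A l) Bi := by
        rw [hBi]
        simp_rw [hupd i Bi]
        rw [Finset.sum_update_of_mem (Finset.mem_univ i)]
        rw [Finset.sum_sdiff_eq_sub (by simp), Finset.sum_erase_eq_sub (Finset.mem_univ i)]
        simp
      have hsumk : dF (Function.update A k A')
          = d A' Bk + ∑ l ∈ Finset.univ.erase k, d (A l) Bk := by
        rw [hBk]
        simp_rw [hupd k Bk]
        rw [Finset.sum_update_of_mem (Finset.mem_univ k)]
        rw [Finset.sum_sdiff_eq_sub (by simp), Finset.sum_erase_eq_sub (Finset.mem_univ k)]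
        simp
      have step1 : dF A ≤ dF (Function.update A i A') + d (A i) A' := by
        have h1 : dF A ≤ ∑ l, d (A l) Bi := hle A Bi
        have h2 : ∑ l, d (A l) Bi
            = d (A i) Bi + ∑ l ∈ Finset.univ.erase i, d (A l) Bi :=
          (Finset.add_sum_erase _ _ (Finset.mem_univ i)).symm
        have h3 : d (A i) Bi ≤ d (A i) A' + d A' Bi := htri _ _ _
        rw [hsumi]
        rw [h2] at h1
        linarith
      have step2 : d (A i) A' ≤ dF (Function.update A k A') := by
        rw [hsumk]
        have h4 : d (A i) Bk ≤ ∑ l ∈ Finset.univ.erase k, d (A l) Bk :=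
          Finset.single_le_sum (fun l _ => hnonneg _ _)
            (Finset.mem_erase.mpr ⟨hik, Finset.mem_univ i⟩)
        have h5 : d (A i) A' ≤ d (A i) Bk + d Bk A' := htri _ _ _
        rw [hsymm Bk A'] at h5
        linarith
      have step3 : dF (Function.update A i A') + dF (Function.update A k A')
          ≤ ∑ j : Fin (m + 2), dF (Function.update A j A') := by
        have := Finset.sum_le_sum_of_subset_of_nonneg
          (Finset.subset_univ ({i, k} : Finset (Fin (m + 2))))
          (fun j _ _ => hnn (Function.update A j A'))
        rwa [Finset.sum_pair hik] at this
      linarith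
end

section
/- Let A and B be m×m Hermitian matrices with eigenvalues a₁ ≤ ... ≤ a_m and b₁ ≤ ... ≤ b_m respectively. Then the Frobenius norm satisfies ⦀A − B⦀_F ≥ sqrt(Σ_{i=1}^m (a_i − b_i)²). -/
open Matrix Finset

private lemma hw_normsq_c (z : ℂ) : ((‖z‖ ^ 2 : ℝ) : ℂ) = z * star z := by
  rw [Complex.star_def, Complex.mul_conj, Complex.normSq_eq_norm_sq]

private lemma hw_rearr {m : ℕ} (a b : Fin m → ℝ) (ha : Monotone a) (hb : Monotone b)
    (ρ : Equiv.Perm (Fin m)) :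
    ∑ i, (a i - b i) ^ 2 ≤ ∑ i, (a i - b (ρ i)) ^ 2 := by
  have h1 : ∑ i, (b (ρ i)) ^ 2 = ∑ i, (b i) ^ 2 := Equiv.sum_comp ρ (fun i => (b i) ^ 2)
  have h2 : ∑ i, a i * b (ρ i) ≤ ∑ i, a i * b i :=
    (ha.monovary hb).sum_mul_comp_perm_le_sum_mul
  have e : ∀ c : Fin m → ℝ, ∑ i, (a i - c i) ^ 2
      = ∑ i, (a i) ^ 2 + ∑ i, (c i) ^ 2 - 2 * ∑ i, a i * c i := by
    intro c
    rw [← Finset.sum_add_distrib, Finset.mul_sum, ← Finset.sum_sub_distrib]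
    exact Finset.sum_congr rfl fun i _ => by ring
  rw [e, e, h1]
  linarith

private lemma hw_bk {m : ℕ} (s : Matrix (Fin m) (Fin m) ℝ)
    (hs : s ∈ doublyStochastic ℝ (Fin m)) (c : Fin m → Fin m → ℝ) :
    ∃ π : Equiv.Perm (Fin m), ∑ i, c i (π i) ≤ ∑ i, ∑ j, s i j * c i j := by
  obtain ⟨w, hw0, hw1, hws⟩ := exists_eq_sum_perm_of_mem_doublyStochastic hs
  obtain ⟨π₀, -, hmin⟩ := Finset.exists_min_image Finset.univ
    (fun π : Equiv.Perm (Fin m) => ∑ i, c i (π i)) ⟨1, Finset.mem_univ 1⟩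
  refine ⟨π₀, ?_⟩
  have hperm : ∀ (π : Equiv.Perm (Fin m)) i j,
      (π.permMatrix ℝ) i j = if π i = j then 1 else 0 := by
    intro π i j
    simp [Equiv.Perm.permMatrix, PEquiv.toMatrix_apply, Equiv.toPEquiv_apply]
  have hrw : ∀ i j, s i j = ∑ π : Equiv.Perm (Fin m), w π * (π.permMatrix ℝ) i j := by
    intro i j
    rw [← hws]
    simp [Matrix.sum_apply, Equiv.toPEquiv_apply, hperm, smul_eq_mul]
  have key : ∑ i, ∑ j, s i j * c i j = ∑ π : Equiv.Perm (Fin m), w π * ∑ i, c i (π i) := by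
    calc ∑ i, ∑ j, s i j * c i j = ∑ i, ∑ π : Equiv.Perm (Fin m), w π * c i (π i) := by
          refine Finset.sum_congr rfl fun i _ => ?_
          simp only [hrw, Finset.sum_mul]
          rw [Finset.sum_comm]
          refine Finset.sum_congr rfl fun π _ => ?_
          simp [hperm, Equiv.toPEquiv_apply, ite_mul, mul_ite, Finset.sum_ite_eq, mul_assoc]
      _ = ∑ π : Equiv.Perm (Fin m), w π * ∑ i, c i (π i) := by
          rw [Finset.sum_comm]
          simp [Finset.mul_sum]
  calc ∑ i, c i (π₀ i) = ∑ π : Equiv.Perm (Fin m), w π * ∑ i, c i (π₀ i) := by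
        rw [← Finset.sum_mul, hw1, one_mul]
    _ ≤ ∑ π : Equiv.Perm (Fin m), w π * ∑ i, c i (π i) :=
        Finset.sum_le_sum fun π _ => mul_le_mul_of_nonneg_left (hmin π (Finset.mem_univ π)) (hw0 π)
    _ = ∑ i, ∑ j, s i j * c i j := key.symm

private lemma hw_uds {m : ℕ} (W : Matrix (Fin m) (Fin m) ℂ)
    (hW : W ∈ Matrix.unitaryGroup (Fin m) ℂ) :
    (Matrix.of fun i j => ‖W i j‖ ^ 2) ∈ doublyStochastic ℝ (Fin m) := by
  rw [mem_doublyStochastic_iff_sum]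
  have h1 : W * star W = 1 := (Matrix.mem_unitaryGroup_iff).mp hW
  have h2 : star W * W = 1 := (Matrix.mem_unitaryGroup_iff').mp hW
  refine ⟨fun i j => by simp only [Matrix.of_apply]; positivity, fun i => ?_, fun j => ?_⟩
  · have h3 := congrFun (congrFun h1 i) i
    rw [Matrix.mul_apply, Matrix.one_apply_eq] at h3
    have h4 : (((∑ j, (Matrix.of fun i j => ‖W i j‖ ^ 2) i j : ℝ)) : ℂ) = 1 := by
      push_cast
      rw [← h3]
      refine Finset.sum_congr rfl fun j _ => ?_
      simp only [Matrix.of_apply, Matrix.star_apply]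
      exact hw_normsq_c (W i j)
    exact_mod_cast h4
  · have h3 := congrFun (congrFun h2 j) j
    rw [Matrix.mul_apply, Matrix.one_apply_eq] at h3
    have h4 : (((∑ i, (Matrix.of fun i j => ‖W i j‖ ^ 2) i j : ℝ)) : ℂ) = 1 := by
      push_cast
      rw [← h3]
      refine Finset.sum_congr rfl fun i _ => ?_
      simp only [Matrix.of_apply, Matrix.star_apply]
      rw [hw_normsq_c (W i j)]
      ring
    exact_mod_cast h4

private lemma hw_trl {m : ℕ} (U V : Matrix (Fin m) (Fin m) ℂ) (d e : Fin m → ℂ) :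
    Matrix.trace ((U * Matrix.diagonal d * star U) * (V * Matrix.diagonal e * star V)) =
      ∑ i, ∑ j, d i * e j * ((star U * V) i j * star ((star U * V) i j)) := by
  have h1 : (U * Matrix.diagonal d * star U) * (V * Matrix.diagonal e * star V)
      = U * (Matrix.diagonal d * star U * V * Matrix.diagonal e * star V) := by
    simp only [Matrix.mul_assoc]
  rw [h1, Matrix.trace_mul_comm]
  have h2 : Matrix.diagonal d * star U * V * Matrix.diagonal e * star V * U
      = Matrix.diagonal d * (star U * V) * Matrix.diagonal e * star (star U * V) := by
    simp only [Matrix.star_mul, star_star, Matrix.mul_assoc]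
  rw [h2]
  set X := star U * V with hX
  rw [Matrix.trace]
  refine Finset.sum_congr rfl fun i _ => ?_
  show ((Matrix.diagonal d * X * Matrix.diagonal e) * star X) i i = _
  rw [Matrix.mul_apply]
  refine Finset.sum_congr rfl fun j _ => ?_
  simp only [Matrix.mul_diagonal, Matrix.diagonal_mul, Matrix.star_apply]
  ring

/-- Hoffman–Wielandt inequality: for Hermitian matrices `A`, `B` with sorted
eigenvalue sequences `a`, `b`, the Frobenius norm of `A - B` is at least
`sqrt (∑ (a i - b i)²)`. -/
theorem hoffman_wielandt {m : ℕ} (A B : Matrix (Fin m) (Fin m) ℂ)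
    (hA : A.IsHermitian) (hB : B.IsHermitian)
    (a b : Fin m → ℝ) (ha_mono : Monotone a) (hb_mono : Monotone b)
    (ha : ∃ σ : Equiv.Perm (Fin m), ∀ i, a i = hA.eigenvalues (σ i))
    (hb : ∃ σ : Equiv.Perm (Fin m), ∀ i, b i = hB.eigenvalues (σ i)) :
    Real.sqrt (∑ i, (a i - b i) ^ 2) ≤
      Real.sqrt (∑ i, ∑ j, ‖(A - B) i j‖ ^ 2) := by
  obtain ⟨σ, hσ⟩ := ha
  obtain ⟨τ, hτ⟩ := hb
  set α := hA.eigenvalues with hα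
  set β := hB.eigenvalues with hβ
  set U := (hA.eigenvectorUnitary : Matrix (Fin m) (Fin m) ℂ) with hU
  set V := (hB.eigenvectorUnitary : Matrix (Fin m) (Fin m) ℂ) with hV
  set W := star U * V with hWdef
  have hWu : W ∈ Matrix.unitaryGroup (Fin m) ℂ :=
    mul_mem (Unitary.star_mem hA.eigenvectorUnitary.2) hB.eigenvectorUnitary.2
  set s : Matrix (Fin m) (Fin m) ℝ := Matrix.of fun i j => ‖W i j‖ ^ 2 with hsdef
  have hs : s ∈ doublyStochastic ℝ (Fin m) := hw_uds W hWu
  have hrow : ∀ i, ∑ j, s i j = 1 := (mem_doublyStochastic_iff_sum.mp hs).2.1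
  have hcol : ∀ j, ∑ i, s i j = 1 := (mem_doublyStochastic_iff_sum.mp hs).2.2
  have hAd : A = U * Matrix.diagonal (fun i => (α i : ℂ)) * star U := by
    convert hA.spectral_theorem using 2
    exact (Unitary.conjStarAlgAut_apply _ _).symm
  have hBd : B = V * Matrix.diagonal (fun i => (β i : ℂ)) * star V := by
    convert hB.spectral_theorem using 2
    exact (Unitary.conjStarAlgAut_apply _ _).symm
  have tAB : Matrix.trace (A * B) = ∑ i, ∑ j, ((α i : ℂ)) * (β j) * ((s i j : ℝ) : ℂ) := by
    conv_lhs => rw [hAd, hBd]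
    rw [hw_trl]
    refine Finset.sum_congr rfl fun i _ => Finset.sum_congr rfl fun j _ => ?_
    rw [show ((s i j : ℝ) : ℂ) = W i j * star (W i j) from hw_normsq_c (W i j)]
  have hUU : star U * U = 1 := Matrix.mem_unitaryGroup_iff'.mp hA.eigenvectorUnitary.2
  have hVV : star V * V = 1 := Matrix.mem_unitaryGroup_iff'.mp hB.eigenvectorUnitary.2
  have tAA : Matrix.trace (A * A) = ∑ i, ((α i : ℂ)) ^ 2 := by
    conv_lhs => rw [hAd]
    rw [hw_trl, hUU]
    simp [Matrix.one_apply, apply_ite (star : ℂ → ℂ), Finset.sum_ite_eq, sq]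
  have tBB : Matrix.trace (B * B) = ∑ i, ((β i : ℂ)) ^ 2 := by
    conv_lhs => rw [hBd]
    rw [hw_trl, hVV]
    simp [Matrix.one_apply, apply_ite (star : ℂ → ℂ), Finset.sum_ite_eq, sq]
  have hM : (A - B).IsHermitian := hA.sub hB
  have tM : ((∑ i, ∑ j, ‖(A - B) i j‖ ^ 2 : ℝ) : ℂ) = Matrix.trace ((A - B) * (A - B)) := by
    rw [Complex.ofReal_sum, Matrix.trace]
    refine Finset.sum_congr rfl fun i _ => ?_
    rw [Complex.ofReal_sum]
    show _ = ((A - B) * (A - B)) i i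
    rw [Matrix.mul_apply]
    refine Finset.sum_congr rfl fun j _ => ?_
    rw [hw_normsq_c ((A - B) i j)]
    congr 1
    have h5 := congrFun (congrFun hM j) i
    rw [Matrix.conjTranspose_apply] at h5
    exact h5
  have expand : Matrix.trace ((A - B) * (A - B))
      = Matrix.trace (A * A) - 2 * Matrix.trace (A * B) + Matrix.trace (B * B) := by
    simp only [Matrix.sub_mul, Matrix.mul_sub, Matrix.trace_sub]
    rw [Matrix.trace_mul_comm B A]
    ring
  have E1 : ∑ i, ∑ j, ‖(A - B) i j‖ ^ 2
      = ∑ i, (α i) ^ 2 + ∑ i, (β i) ^ 2 - 2 * ∑ i, ∑ j, s i j * (α i * β j) := by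
    have hc : ((∑ i, ∑ j, ‖(A - B) i j‖ ^ 2 : ℝ) : ℂ)
        = ((∑ i, (α i) ^ 2 + ∑ i, (β i) ^ 2 - 2 * ∑ i, ∑ j, s i j * (α i * β j) : ℝ) : ℂ) := by
      rw [tM, expand, tAA, tAB, tBB]
      push_cast
      rw [show (∑ i, ∑ j, ((α i : ℂ)) * (β j) * ((s i j : ℝ) : ℂ))
          = ∑ i, ∑ j, ((s i j : ℝ) : ℂ) * (α i) * (β j) from
        Finset.sum_congr rfl fun i _ => Finset.sum_congr rfl fun j _ => by ring]
      ring
    exact_mod_cast hc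
  have E2 : ∑ i, ∑ j, s i j * (α i - β j) ^ 2
      = ∑ i, (α i) ^ 2 + ∑ i, (β i) ^ 2 - 2 * ∑ i, ∑ j, s i j * (α i * β j) := by
    have t1 : ∑ i, ∑ j, s i j * (α i) ^ 2 = ∑ i, (α i) ^ 2 :=
      Finset.sum_congr rfl fun i _ => by rw [← Finset.sum_mul, hrow i, one_mul]
    have t2 : ∑ i, ∑ j, s i j * (β j) ^ 2 = ∑ j, (β j) ^ 2 := by
      rw [Finset.sum_comm]
      exact Finset.sum_congr rfl fun j _ => by rw [← Finset.sum_mul, hcol j, one_mul]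
    calc ∑ i, ∑ j, s i j * (α i - β j) ^ 2
        = ∑ i, (∑ j, s i j * (α i) ^ 2 + ∑ j, s i j * (β j) ^ 2
            - 2 * ∑ j, s i j * (α i * β j)) := by
          refine Finset.sum_congr rfl fun i _ => ?_
          rw [← Finset.sum_add_distrib, Finset.mul_sum, ← Finset.sum_sub_distrib]
          exact Finset.sum_congr rfl fun j _ => by ring
      _ = ∑ i, ∑ j, s i j * (α i) ^ 2 + ∑ i, ∑ j, s i j * (β j) ^ 2
            - 2 * ∑ i, ∑ j, s i j * (α i * β j) := by
          rw [← Finset.sum_add_distrib, Finset.mul_sum, ← Finset.sum_sub_distrib]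
      _ = ∑ i, (α i) ^ 2 + ∑ i, (β i) ^ 2 - 2 * ∑ i, ∑ j, s i j * (α i * β j) := by
          rw [t1, t2]
  obtain ⟨π, hπ⟩ := hw_bk s hs (fun i j => (α i - β j) ^ 2)
  set ρ : Equiv.Perm (Fin m) := (σ.trans π).trans τ.symm with hρ
  have step1 : ∑ i, (a i - b i) ^ 2 ≤ ∑ i, (a i - b (ρ i)) ^ 2 :=
    hw_rearr a b ha_mono hb_mono ρ
  have step2 : ∑ i, (a i - b (ρ i)) ^ 2 = ∑ i, (α i - β (π i)) ^ 2 := by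
    rw [← Equiv.sum_comp σ (fun i => (α i - β (π i)) ^ 2)]
    refine Finset.sum_congr rfl fun i _ => ?_
    rw [hσ i, hτ (ρ i)]
    simp [hρ, Equiv.trans_apply, Equiv.apply_symm_apply]
  have final : ∑ i, (a i - b i) ^ 2 ≤ ∑ i, ∑ j, ‖(A - B) i j‖ ^ 2 := by
    calc ∑ i, (a i - b i) ^ 2 ≤ ∑ i, (a i - b (ρ i)) ^ 2 := step1
      _ = ∑ i, (α i - β (π i)) ^ 2 := step2
      _ ≤ ∑ i, ∑ j, s i j * (α i - β j) ^ 2 := hπ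
      _ = ∑ i, ∑ j, ‖(A - B) i j‖ ^ 2 := by rw [E1, E2]
  exact Real.sqrt_le_sqrt final
end

section
/- Let A and B be m×m Hermitian matrices with eigenvalues a₁ ≤ ... ≤ a_m and b₁ ≤ ... ≤ b_m respectively. Then the operator 2-norm satisfies ⦀A − B⦀₂ ≥ max_{i∈[m]} |a_i − b_i|. -/
open Matrix
open scoped Matrix.Norms.L2Operator

namespace WeylAux

local notation "⟪" x ", " y "⟫" => @inner ℂ _ _ x y

variable {m : ℕ}

lemma repr_eq_zero_of_mem_span (v : OrthonormalBasis (Fin m) ℂ (EuclideanSpace ℂ (Fin m)))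
    (S : Set (Fin m)) {x : EuclideanSpace ℂ (Fin m)}
    (hx : x ∈ Submodule.span ℂ (v '' S)) {k : Fin m} (hk : k ∉ S) :
    v.repr x k = 0 := by
  induction hx using Submodule.span_induction with
  | mem y hy =>
      obtain ⟨s, hs, rfl⟩ := hy
      rw [v.repr_self, EuclideanSpace.single_apply, if_neg]
      rintro rfl; exact hk hs
  | zero => simp
  | add y z _ _ hy hz => rw [map_add]; simp [hy, hz]
  | smul c y _ hy => rw [_root_.map_smul]; simp [hy]

lemma repr_toEuclideanLin {A : Matrix (Fin m) (Fin m) ℂ} (hA : A.IsHermitian)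
    (x : EuclideanSpace ℂ (Fin m)) (k : Fin m) :
    hA.eigenvectorBasis.repr (Matrix.toEuclideanLin A x) k
      = hA.eigenvalues k * hA.eigenvectorBasis.repr x k := by
  have hsymm := Matrix.isHermitian_iff_isSymmetric.mp hA
  rw [OrthonormalBasis.repr_apply_apply, OrthonormalBasis.repr_apply_apply,
    ← hsymm (hA.eigenvectorBasis k) x]
  have hv : Matrix.toEuclideanLin A (hA.eigenvectorBasis k)
      = (hA.eigenvalues k : ℂ) • hA.eigenvectorBasis k := by
    apply (WithLp.equiv 2 (Fin m → ℂ)).injective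
    ext j
    have := congrFun (hA.mulVec_eigenvectorBasis k) j
    simpa [Matrix.toEuclideanLin_apply] using this
  rw [hv, inner_smul_left, Complex.conj_ofReal]

lemma re_inner_toEuclideanLin {A : Matrix (Fin m) (Fin m) ℂ} (hA : A.IsHermitian)
    (x : EuclideanSpace ℂ (Fin m)) :
    Complex.re ⟪x, Matrix.toEuclideanLin A x⟫ =
      ∑ k, hA.eigenvalues k * ‖hA.eigenvectorBasis.repr x k‖ ^ 2 := by
  rw [← hA.eigenvectorBasis.repr.inner_map_map x (Matrix.toEuclideanLin A x)]
  rw [PiLp.inner_apply]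
  rw [Complex.re_sum]
  refine Finset.sum_congr rfl fun k _ => ?_
  rw [repr_toEuclideanLin hA x k, RCLike.inner_apply]
  set c := hA.eigenvectorBasis.repr x k
  have : (starRingEnd ℂ) c * ((hA.eigenvalues k : ℂ) * c)
      = ((hA.eigenvalues k * ‖c‖ ^ 2 : ℝ) : ℂ) := by
    rw [show (starRingEnd ℂ) c * ((hA.eigenvalues k : ℂ) * c)
        = (hA.eigenvalues k : ℂ) * (c * (starRingEnd ℂ) c) by ring,
      Complex.mul_conj, Complex.normSq_eq_norm_sq]
    push_cast
    ring
  rw [show (↑(hA.eigenvalues k) * c * (starRingEnd ℂ) c) = (starRingEnd ℂ) c * ((hA.eigenvalues k : ℂ) * c) by ring,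
    this, Complex.ofReal_re]

lemma norm_sq_repr (v : OrthonormalBasis (Fin m) ℂ (EuclideanSpace ℂ (Fin m)))
    (x : EuclideanSpace ℂ (Fin m)) :
    ‖x‖ ^ 2 = ∑ k, ‖v.repr x k‖ ^ 2 := by
  rw [← v.repr.norm_map x, EuclideanSpace.norm_eq, Real.sq_sqrt]
  positivity

lemma norm_toEuclideanLin_le (M : Matrix (Fin m) (Fin m) ℂ) (x : EuclideanSpace ℂ (Fin m)) :
    ‖Matrix.toEuclideanLin M x‖ ≤ ‖M‖ * ‖x‖ :=
  Matrix.l2_opNorm_mulVec M x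

set_option maxHeartbeats 1000000 in
lemma weyl_one {m : ℕ} (A B : Matrix (Fin m) (Fin m) ℂ)
    (hA : A.IsHermitian) (hB : B.IsHermitian)
    (a b : Fin m → ℝ) (ha_mono : Monotone a) (hb_mono : Monotone b)
    (ha : ∃ σ : Equiv.Perm (Fin m), ∀ i, a i = hA.eigenvalues (σ i))
    (hb : ∃ σ : Equiv.Perm (Fin m), ∀ i, b i = hB.eigenvalues (σ i))
    (i : Fin m) : a i - b i ≤ ‖A - B‖ := by
  obtain ⟨σ, hσ⟩ := ha
  obtain ⟨τ, hτ⟩ := hb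
  set vA := hA.eigenvectorBasis with hvA
  set vB := hB.eigenvectorBasis with hvB
  set SA : Set (Fin m) := σ '' {j | i ≤ j} with hSA
  set SB : Set (Fin m) := τ '' {j | j ≤ i} with hSB
  set E : Submodule ℂ (EuclideanSpace ℂ (Fin m)) := Submodule.span ℂ (⇑vA '' SA) with hE
  set F : Submodule ℂ (EuclideanSpace ℂ (Fin m)) := Submodule.span ℂ (⇑vB '' SB) with hF
  -- dimensions
  have hrangeA : ⇑vA '' SA = Set.range fun j : {j : Fin m // i ≤ j} => vA (σ j) := by
    ext y
    constructor
    · rintro ⟨_, ⟨k, hk, rfl⟩, rfl⟩; exact ⟨⟨k, hk⟩, rfl⟩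
    · rintro ⟨⟨k, hk⟩, rfl⟩; exact ⟨σ k, ⟨k, hk, rfl⟩, rfl⟩
  have hrangeB : ⇑vB '' SB = Set.range fun j : {j : Fin m // j ≤ i} => vB (τ j) := by
    ext y
    constructor
    · rintro ⟨_, ⟨k, hk, rfl⟩, rfl⟩; exact ⟨⟨k, hk⟩, rfl⟩
    · rintro ⟨⟨k, hk⟩, rfl⟩; exact ⟨τ k, ⟨k, hk, rfl⟩, rfl⟩
  have hdimE : Module.finrank ℂ E = Fintype.card {j : Fin m // i ≤ j} := by
    rw [hE, hrangeA]
    exact finrank_span_eq_card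
      ((vA.orthonormal.comp _ (σ.injective.comp Subtype.val_injective)).linearIndependent)
  have hdimF : Module.finrank ℂ F = Fintype.card {j : Fin m // j ≤ i} := by
    rw [hF, hrangeB]
    exact finrank_span_eq_card
      ((vB.orthonormal.comp _ (τ.injective.comp Subtype.val_injective)).linearIndependent)
  have hcard : Fintype.card {j : Fin m // i ≤ j} + Fintype.card {j : Fin m // j ≤ i}
      = m + 1 := by
    classical
    rw [Fintype.card_subtype, Fintype.card_subtype]
    have h1 : (Finset.univ.filter fun j : Fin m => i ≤ j)
        ∪ (Finset.univ.filter fun j : Fin m => j ≤ i) = Finset.univ := by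
      ext j; simp [le_total i j]
    have h2 : (Finset.univ.filter fun j : Fin m => i ≤ j)
        ∩ (Finset.univ.filter fun j : Fin m => j ≤ i) = {i} := by
      ext j; simp [Finset.mem_inter, le_antisymm_iff, and_comm, eq_comm]
    have := Finset.card_union_add_card_inter
      (Finset.univ.filter fun j : Fin m => i ≤ j)
      (Finset.univ.filter fun j : Fin m => j ≤ i)
    rw [h1, h2] at this
    simpa using this.symm
  -- intersection is nontrivial
  have hfin : 0 < Module.finrank ℂ ↥(E ⊓ F) := by
    have hsum := Submodule.finrank_sup_add_finrank_inf_eq E F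
    have hle : Module.finrank ℂ ↥(E ⊔ F) ≤ m := by
      have := Submodule.finrank_le (E ⊔ F)
      simpa [finrank_euclideanSpace] using this
    omega
  obtain ⟨⟨x, hxEF⟩, hx0⟩ := Module.finrank_pos_iff_exists_ne_zero.mp hfin
  have hxE : x ∈ E := hxEF.1
  have hxF : x ∈ F := hxEF.2
  have hx : x ≠ 0 := fun h => hx0 (Subtype.ext h)
  have hxnorm : 0 < ‖x‖ ^ 2 := pow_pos (norm_pos_iff.mpr hx) 2
  -- quadratic form bounds
  have hAbound : a i * ‖x‖ ^ 2 ≤ Complex.re ⟪x, Matrix.toEuclideanLin A x⟫ := by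
    rw [re_inner_toEuclideanLin hA, norm_sq_repr vA, Finset.mul_sum]
    refine Finset.sum_le_sum fun k _ => ?_
    by_cases hc : vA.repr x k = 0
    · simp [← hvA, hc]
    · have hkS : k ∈ SA := by
        by_contra hk
        exact hc (repr_eq_zero_of_mem_span vA SA hxE hk)
      obtain ⟨j, hj, rfl⟩ := hkS
      rw [← hσ j]
      exact mul_le_mul_of_nonneg_right (ha_mono hj) (by positivity)
  have hBbound : Complex.re ⟪x, Matrix.toEuclideanLin B x⟫ ≤ b i * ‖x‖ ^ 2 := by
    rw [re_inner_toEuclideanLin hB, norm_sq_repr vB, Finset.mul_sum]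
    refine Finset.sum_le_sum fun k _ => ?_
    by_cases hc : vB.repr x k = 0
    · simp [← hvB, hc]
    · have hkS : k ∈ SB := by
        by_contra hk
        exact hc (repr_eq_zero_of_mem_span vB SB hxF hk)
      obtain ⟨j, hj, rfl⟩ := hkS
      rw [← hτ j]
      exact mul_le_mul_of_nonneg_right (hb_mono hj) (by positivity)
  -- combine
  have hsub : Matrix.toEuclideanLin (A - B) x
      = Matrix.toEuclideanLin A x - Matrix.toEuclideanLin B x := by
    rw [map_sub]; rfl
  have hkey : (a i - b i) * ‖x‖ ^ 2 ≤ ‖A - B‖ * ‖x‖ ^ 2 := by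
    calc (a i - b i) * ‖x‖ ^ 2 = a i * ‖x‖ ^ 2 - b i * ‖x‖ ^ 2 := by ring
    _ ≤ Complex.re ⟪x, Matrix.toEuclideanLin A x⟫
        - Complex.re ⟪x, Matrix.toEuclideanLin B x⟫ := by
        exact sub_le_sub hAbound hBbound
    _ = Complex.re ⟪x, Matrix.toEuclideanLin (A - B) x⟫ := by
        rw [hsub, inner_sub_right]; simp
    _ ≤ ‖⟪x, Matrix.toEuclideanLin (A - B) x⟫‖ := by
        exact (abs_le.1 (Complex.abs_re_le_norm _)).2
    _ ≤ ‖x‖ * ‖Matrix.toEuclideanLin (A - B) x‖ := norm_inner_le_norm _ _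
    _ ≤ ‖x‖ * (‖A - B‖ * ‖x‖) := by
        exact mul_le_mul_of_nonneg_left (norm_toEuclideanLin_le (A - B) x) (norm_nonneg x)
    _ = ‖A - B‖ * ‖x‖ ^ 2 := by ring
  exact le_of_mul_le_mul_right hkey hxnorm

end WeylAux

/-- Weyl's perturbation inequality: for Hermitian matrices `A`, `B` with sorted
eigenvalue sequences `a`, `b`, the operator 2-norm of `A - B` is at least
`max_i |a i - b i|`. -/
theorem weyl_perturbation {m : ℕ} (A B : Matrix (Fin m) (Fin m) ℂ)
    (hA : A.IsHermitian) (hB : B.IsHermitian)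
    (a b : Fin m → ℝ) (ha_mono : Monotone a) (hb_mono : Monotone b)
    (ha : ∃ σ : Equiv.Perm (Fin m), ∀ i, a i = hA.eigenvalues (σ i))
    (hb : ∃ σ : Equiv.Perm (Fin m), ∀ i, b i = hB.eigenvalues (σ i)) :
    ∀ i : Fin m, |a i - b i| ≤ ‖A - B‖ := by
  intro i
  rw [abs_sub_le_iff]
  constructor
  · exact WeylAux.weyl_one A B hA hB a b ha_mono hb_mono ha hb i
  · have := WeylAux.weyl_one B A hB hA b a hb_mono ha_mono hb ha i
    rwa [norm_sub_rev] at this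
end

section
/- Let A₁,...,A_n be real symmetric m×m matrices with sorted eigenvalue vectors Λ_{A_i} ∈ ℝ^m (increasing order). Let d_F(A_{1:n}) = min over C ∈ (real symmetric matrices) and orthogonal P₁,...,P_n of Σ_{i=1}^n ⦀A_i P_i − P_i C⦀_F. Then d_F(A_{1:n}) = min_{Λ_C ∈ ℝ^m} Σ_{i=1}^n ‖Λ_{A_i} − Λ_C‖₂, i.e., the Fermat distance reduces to the geometric median problem on eigenvalue spectra. -/
open Matrix

open Finset

section helpers
variable {m : ℕ}

private lemma frob_eq_trace (M : Matrix (Fin m) (Fin m) ℝ) :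
    ∑ a, ∑ b, (M a b) ^ 2 = (Mᵀ * M).trace := by
  rw [Finset.sum_comm]
  simp [Matrix.trace, Matrix.mul_apply, Matrix.diag, sq]

private lemma frob_mul_left {P M : Matrix (Fin m) (Fin m) ℝ} (hP : Pᵀ * P = 1) :
    ∑ a, ∑ b, ((P * M) a b) ^ 2 = ∑ a, ∑ b, (M a b) ^ 2 := by
  rw [frob_eq_trace, frob_eq_trace, Matrix.transpose_mul, Matrix.mul_assoc,
    ← Matrix.mul_assoc Pᵀ P M, hP, Matrix.one_mul]

private lemma sq_mem_doublyStochastic {W : Matrix (Fin m) (Fin m) ℝ}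
    (h1 : W * Wᵀ = 1) (h2 : Wᵀ * W = 1) :
    Matrix.of (fun i j => W i j ^ 2) ∈ doublyStochastic ℝ (Fin m) := by
  rw [mem_doublyStochastic_iff_sum]
  refine ⟨fun i j => sq_nonneg _, fun i => ?_, fun j => ?_⟩
  · have := congrFun (congrFun h1 i) i
    simpa [Matrix.mul_apply, sq, Matrix.one_apply] using this
  · have := congrFun (congrFun h2 j) j
    simpa [Matrix.mul_apply, sq, Matrix.one_apply] using this

private lemma sum_mul_doublyStochastic_le (lam mu : Fin m → ℝ)
    (hlam : Monotone lam) (hmu : Monotone mu)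
    {S : Matrix (Fin m) (Fin m) ℝ} (hS : S ∈ doublyStochastic ℝ (Fin m)) :
    ∑ i, ∑ j, lam i * mu j * S i j ≤ ∑ i, lam i * mu i := by
  have hlin : IsLinearMap ℝ
      (fun T : Matrix (Fin m) (Fin m) ℝ => ∑ i, ∑ j, lam i * mu j * T i j) := by
    constructor
    · intro x y
      simp only [Matrix.add_apply, mul_add, Finset.sum_add_distrib]
    · intro c x
      simp only [Matrix.smul_apply, smul_eq_mul, Finset.mul_sum]
      exact Finset.sum_congr rfl fun i _ => Finset.sum_congr rfl fun j _ => by ring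
  have hmem : S ∈ convexHull ℝ {M : Matrix (Fin m) (Fin m) ℝ |
      ∃ σ : Equiv.Perm (Fin m), σ.permMatrix ℝ = M} := by
    rw [← doublyStochastic_eq_convexHull_permMatrix]; exact hS
  refine convexHull_min ?_ (convex_halfSpace_le hlin (∑ i, lam i * mu i)) hmem
  rintro M ⟨σ, rfl⟩
  show ∑ i, ∑ j, lam i * mu j * (σ.permMatrix ℝ) i j ≤ _
  have hrow : ∀ i, ∑ j, lam i * mu j * (σ.permMatrix ℝ) i j = lam i * mu (σ i) := by
    intro i
    simp [Equiv.Perm.permMatrix, PEquiv.toMatrix_apply, Equiv.toPEquiv_apply,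
      mul_ite, mul_one, mul_zero]
  rw [Finset.sum_congr rfl fun i _ => hrow i]
  simpa using (hlam.monovary hmu).sum_smul_comp_perm_le_sum_smul (σ := σ)

private lemma real_spectral {A : Matrix (Fin m) (Fin m) ℝ} (hA : A.IsHermitian) :
    ∃ U : Matrix (Fin m) (Fin m) ℝ, U * Uᵀ = 1 ∧ Uᵀ * U = 1 ∧
      A = U * Matrix.diagonal hA.eigenvalues * Uᵀ := by
  refine ⟨hA.eigenvectorUnitary, ?_, ?_, ?_⟩
  · have := Matrix.mem_unitaryGroup_iff.mp hA.eigenvectorUnitary.2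
    rwa [Matrix.star_eq_conjTranspose, Matrix.conjTranspose_eq_transpose_of_trivial] at this
  · have := Matrix.mem_unitaryGroup_iff'.mp hA.eigenvectorUnitary.2
    rwa [Matrix.star_eq_conjTranspose, Matrix.conjTranspose_eq_transpose_of_trivial] at this
  · have := hA.spectral_theorem
    rwa [Unitary.conjStarAlgAut_apply, Matrix.star_eq_conjTranspose, Matrix.conjTranspose_eq_transpose_of_trivial,
      RCLike.ofReal_real_eq_id, Function.id_comp] at this

end helpers

section part2
variable {m : ℕ}

private lemma trace_DWEW (d e : Fin m → ℝ) (W : Matrix (Fin m) (Fin m) ℝ) :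
    (Matrix.diagonal d * W * Matrix.diagonal e * Wᵀ).trace
      = ∑ i, ∑ j, d i * e j * (W i j) ^ 2 := by
  simp only [Matrix.trace, Matrix.diag_apply, Matrix.mul_apply, Matrix.diagonal_apply,
    Matrix.transpose_apply, ite_mul, zero_mul, mul_ite, mul_zero, Finset.sum_ite_eq,
    Finset.sum_ite_eq', Finset.mem_univ, if_true]
  exact Finset.sum_congr rfl fun i _ => Finset.sum_congr rfl fun j _ => by ring

private lemma trace_sq_eq {A : Matrix (Fin m) (Fin m) ℝ} (hA : A.IsHermitian)
    (lam : Fin m → ℝ) (σ : Equiv.Perm (Fin m)) (hσ : ∀ a, lam a = hA.eigenvalues (σ a)) :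
    (A * A).trace = ∑ a, lam a ^ 2 := by
  obtain ⟨U, hU1, hU2, hUA⟩ := real_spectral hA
  set d := hA.eigenvalues with hd
  have hAA : A * A = U * (Matrix.diagonal d * Matrix.diagonal d) * Uᵀ := by
    conv_lhs => rw [hUA]
    simp only [Matrix.mul_assoc]
    rw [← Matrix.mul_assoc Uᵀ U, hU2, Matrix.one_mul]
  rw [hAA, Matrix.trace_mul_cycle, ← Matrix.mul_assoc, hU2, Matrix.one_mul,
    Matrix.diagonal_mul_diagonal, Matrix.trace_diagonal]
  rw [Finset.sum_congr rfl fun a (_ : a ∈ Finset.univ) => (by rw [hσ] : lam a ^ 2 = d (σ a) ^ 2)]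
  rw [Equiv.sum_comp σ (fun a => d a ^ 2)]
  exact Finset.sum_congr rfl fun a _ => (sq _).symm

private lemma trace_APCPt_le {A C P : Matrix (Fin m) (Fin m) ℝ}
    (hA : A.IsHermitian) (hC : C.IsHermitian)
    (lam mu : Fin m → ℝ) (hlam : Monotone lam) (hmu : Monotone mu)
    (σ τ : Equiv.Perm (Fin m)) (hσ : ∀ a, lam a = hA.eigenvalues (σ a))
    (hτ : ∀ a, mu a = hC.eigenvalues (τ a))
    (hP1 : P * Pᵀ = 1) (hP2 : Pᵀ * P = 1) :
    (A * P * C * Pᵀ).trace ≤ ∑ a, lam a * mu a := by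
  obtain ⟨U, hU1, hU2, hUA⟩ := real_spectral hA
  obtain ⟨V, hV1, hV2, hVC⟩ := real_spectral hC
  set d := hA.eigenvalues with hd
  set e := hC.eigenvalues with he
  set W := Uᵀ * P * V with hWdef
  have hW1 : W * Wᵀ = 1 := by
    rw [hWdef]
    simp only [Matrix.transpose_mul, Matrix.transpose_transpose, Matrix.mul_assoc]
    rw [← Matrix.mul_assoc V Vᵀ, hV1, Matrix.one_mul, ← Matrix.mul_assoc P Pᵀ, hP1,
      Matrix.one_mul, hU2]
  have hW2 : Wᵀ * W = 1 := by
    rw [hWdef]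
    simp only [Matrix.transpose_mul, Matrix.transpose_transpose, Matrix.mul_assoc]
    rw [← Matrix.mul_assoc U Uᵀ, hU1, Matrix.one_mul, ← Matrix.mul_assoc Pᵀ P, hP2,
      Matrix.one_mul, hV2]
  have hkey : A * P * C * Pᵀ = U * (Matrix.diagonal d * W * Matrix.diagonal e * Wᵀ) * Uᵀ := by
    rw [hUA, hVC, hWdef]
    simp only [Matrix.transpose_mul, Matrix.transpose_transpose, Matrix.mul_assoc]
    rw [hU1, Matrix.mul_one]
  rw [hkey, Matrix.trace_mul_cycle, ← Matrix.mul_assoc, hU2, Matrix.one_mul, trace_DWEW]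
  -- reindex
  have hre : ∑ i, ∑ j, d i * e j * (W i j) ^ 2
      = ∑ i, ∑ j, lam i * mu j * ((W.submatrix σ τ) i j) ^ 2 := by
    rw [← Equiv.sum_comp σ (fun i => ∑ j, d i * e j * (W i j) ^ 2)]
    refine Finset.sum_congr rfl fun i _ => ?_
    rw [← Equiv.sum_comp τ (fun j => d (σ i) * e j * (W (σ i) j) ^ 2)]
    exact Finset.sum_congr rfl fun j _ => by rw [hσ, hτ, Matrix.submatrix_apply]
  rw [hre]
  have hsub1 : (W.submatrix σ τ) * (W.submatrix σ τ)ᵀ = 1 := by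
    rw [Matrix.transpose_submatrix, Matrix.submatrix_mul_equiv, hW1, Matrix.submatrix_one_equiv]
  have hsub2 : (W.submatrix σ τ)ᵀ * (W.submatrix σ τ) = 1 := by
    rw [Matrix.transpose_submatrix, Matrix.submatrix_mul_equiv, hW2, Matrix.submatrix_one_equiv]
  exact sum_mul_doublyStochastic_le lam mu hlam hmu (sq_mem_doublyStochastic hsub1 hsub2)

private lemma hw_ineq {A C P : Matrix (Fin m) (Fin m) ℝ}
    (hA : A.IsHermitian) (hC : C.IsHermitian)
    (lam mu : Fin m → ℝ) (hlam : Monotone lam) (hmu : Monotone mu)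
    (σ τ : Equiv.Perm (Fin m)) (hσ : ∀ a, lam a = hA.eigenvalues (σ a))
    (hτ : ∀ a, mu a = hC.eigenvalues (τ a))
    (hP1 : P * Pᵀ = 1) (hP2 : Pᵀ * P = 1) :
    ∑ a, (lam a - mu a) ^ 2 ≤ ∑ a, ∑ b, ((A * P - P * C) a b) ^ 2 := by
  have hAt : Aᵀ = A := by
    rw [← Matrix.conjTranspose_eq_transpose_of_trivial]; exact hA
  have hCt : Cᵀ = C := by
    rw [← Matrix.conjTranspose_eq_transpose_of_trivial]; exact hC
  rw [frob_eq_trace]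
  have e1 : (A*P - P*C)ᵀ * (A*P - P*C)
      = (A*P)ᵀ*(A*P) - (A*P)ᵀ*(P*C) - ((P*C)ᵀ*(A*P) - (P*C)ᵀ*(P*C)) := by
    rw [Matrix.transpose_sub]; noncomm_ring
  have t1 : ((A*P)ᵀ*(A*P)).trace = ∑ a, lam a ^ 2 := by
    rw [Matrix.transpose_mul, hAt, Matrix.trace_mul_comm]
    have h : (A*P)*(Pᵀ*A) = A*A := by
      rw [← Matrix.mul_assoc, Matrix.mul_assoc A P Pᵀ, hP1, Matrix.mul_one]
    rw [h, trace_sq_eq hA lam σ hσ]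
  have t4 : ((P*C)ᵀ*(P*C)).trace = ∑ a, mu a ^ 2 := by
    rw [Matrix.transpose_mul, Matrix.trace_mul_comm]
    have h : (P*C)*(Cᵀ*Pᵀ) = P*(C*C)*Pᵀ := by
      rw [hCt, ← Matrix.mul_assoc, Matrix.mul_assoc P C C]
    rw [h, Matrix.trace_mul_cycle, ← Matrix.mul_assoc, hP2, Matrix.one_mul,
      trace_sq_eq hC mu τ hτ]
  have t2 : ((A*P)ᵀ*(P*C)).trace = (A*P*C*Pᵀ).trace := by
    rw [Matrix.transpose_mul, hAt]
    have h : (Pᵀ*A)*(P*C) = Pᵀ*(A*P*C) := by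
      rw [Matrix.mul_assoc, ← Matrix.mul_assoc A P C]
    rw [h, Matrix.trace_mul_comm]
  have t3 : ((P*C)ᵀ*(A*P)).trace = (A*P*C*Pᵀ).trace := by
    rw [Matrix.transpose_mul, hCt, Matrix.trace_mul_comm]
    have h : (A*P)*(C*Pᵀ) = A*P*C*Pᵀ := by rw [← Matrix.mul_assoc]
    rw [h]
  have hbound := trace_APCPt_le hA hC lam mu hlam hmu σ τ hσ hτ hP1 hP2
  have hexp : ∑ a, (lam a - mu a) ^ 2
      = ∑ a, lam a ^ 2 + ∑ a, mu a ^ 2 - 2 * ∑ a, lam a * mu a := by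
    rw [← Finset.sum_add_distrib, Finset.mul_sum, ← Finset.sum_sub_distrib]
    exact Finset.sum_congr rfl fun a _ => by ring
  rw [e1, Matrix.trace_sub, Matrix.trace_sub, Matrix.trace_sub, t1, t2, t3, t4, hexp]
  linarith

end part2

section part3
variable {m : ℕ}

private lemma exists_rep {A : Matrix (Fin m) (Fin m) ℝ} (hA : A.IsHermitian)
    (lam : Fin m → ℝ) (σ : Equiv.Perm (Fin m)) (hσ : ∀ a, lam a = hA.eigenvalues (σ a))
    (ΛC : Fin m → ℝ) :
    ∃ P : Matrix (Fin m) (Fin m) ℝ, (P * Pᵀ = 1 ∧ Pᵀ * P = 1) ∧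
      ∑ a, ∑ b, ((A * P - P * Matrix.diagonal ΛC) a b) ^ 2 = ∑ a, (lam a - ΛC a) ^ 2 := by
  obtain ⟨U, hU1, hU2, hUA⟩ := real_spectral hA
  set d := hA.eigenvalues with hd
  refine ⟨U.submatrix id σ, ⟨?_, ?_⟩, ?_⟩
  · rw [Matrix.transpose_submatrix, Matrix.submatrix_mul_equiv, hU1]
    simp
  · rw [Matrix.transpose_submatrix]
    have : (Uᵀ).submatrix ⇑σ id * U.submatrix id ⇑σ
        = (Uᵀ).submatrix ⇑σ ⇑(Equiv.refl (Fin m)) * U.submatrix ⇑(Equiv.refl (Fin m)) ⇑σ := by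
      simp
    rw [this, Matrix.submatrix_mul_equiv, hU2, Matrix.submatrix_one_equiv]
  · -- A * P = P * diagonal lam
    have hAU : A * U = U * Matrix.diagonal d := by
      rw [hUA]
      simp only [Matrix.mul_assoc]
      rw [hU2, Matrix.mul_one]
    have hAP : A * U.submatrix id σ = U.submatrix id σ * Matrix.diagonal lam := by
      have h1 : A * U.submatrix id ⇑σ
          = A.submatrix ⇑(Equiv.refl (Fin m)) ⇑(Equiv.refl (Fin m))
            * U.submatrix ⇑(Equiv.refl (Fin m)) ⇑σ := by simp
      have h2 : U.submatrix id ⇑σ * Matrix.diagonal lam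
          = U.submatrix id ⇑σ * (Matrix.diagonal d).submatrix ⇑σ ⇑σ := by
        rw [Matrix.submatrix_diagonal_equiv]
        congr 1
        exact congrArg Matrix.diagonal (funext fun a => hσ a)
      rw [h1, Matrix.submatrix_mul_equiv, h2, Matrix.submatrix_mul_equiv, hAU]
      simp
    have hdiff : A * U.submatrix id σ - U.submatrix id σ * Matrix.diagonal ΛC
        = U.submatrix id σ * Matrix.diagonal (fun a => lam a - ΛC a) := by
      rw [hAP, ← Matrix.mul_sub]
      congr 1
      rw [Matrix.diagonal_sub]
    rw [hdiff]
    have hPtP : (U.submatrix id ⇑σ)ᵀ * U.submatrix id ⇑σ = 1 := by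
      rw [Matrix.transpose_submatrix]
      have : (Uᵀ).submatrix ⇑σ id * U.submatrix id ⇑σ
          = (Uᵀ).submatrix ⇑σ ⇑(Equiv.refl (Fin m)) * U.submatrix ⇑(Equiv.refl (Fin m)) ⇑σ := by
        simp
      rw [this, Matrix.submatrix_mul_equiv, hU2, Matrix.submatrix_one_equiv]
    rw [frob_mul_left hPtP]
    simp [Matrix.diagonal_apply, apply_ite (· ^ 2 : ℝ → ℝ)]

end part3


/-- For real symmetric matrices compared with orthogonal alignments and the
Frobenius norm, the Fermat distance equals the geometric-median value of the
sorted eigenvalue spectra: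
`min_{C, P_i orth} ∑ ⦀A_i P_i − P_i C⦀_F = min_{Λ_C ∈ ℝ^m} ∑ ‖Λ_{A_i} − Λ_C‖₂`. -/
theorem fermat_orthogonal_spectra {m n : ℕ}
    (A : Fin n → Matrix (Fin m) (Fin m) ℝ)
    (hA : ∀ i, (A i).IsHermitian)
    (Λ : Fin n → Fin m → ℝ)
    (hΛ_mono : ∀ i, Monotone (Λ i))
    (hΛ : ∀ i, ∃ σ : Equiv.Perm (Fin m), ∀ a, Λ i a = (hA i).eigenvalues (σ a))
    (dF : ℝ)
    (hdF : IsLeast {x : ℝ | ∃ C : Matrix (Fin m) (Fin m) ℝ, C.IsSymm ∧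
        ∃ P : Fin n → Matrix (Fin m) (Fin m) ℝ,
          (∀ i, P i * (P i)ᵀ = 1 ∧ (P i)ᵀ * P i = 1) ∧
          x = ∑ i, Real.sqrt (∑ a, ∑ b, ((A i * P i - P i * C) a b) ^ 2)} dF) :
    IsLeast {y : ℝ | ∃ ΛC : Fin m → ℝ,
        y = ∑ i, Real.sqrt (∑ a, (Λ i a - ΛC a) ^ 2)} dF := by
  choose σs hσs using hΛ
  have hlb : ∀ ΛC : Fin m → ℝ, dF ≤ ∑ i, Real.sqrt (∑ a, (Λ i a - ΛC a) ^ 2) := by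
    intro ΛC
    apply hdF.2
    refine ⟨Matrix.diagonal ΛC, Matrix.isSymm_diagonal _, ?_⟩
    choose P hP hPval using fun i => exists_rep (hA i) (Λ i) (σs i) (hσs i) ΛC
    refine ⟨P, fun i => hP i, ?_⟩
    exact (Finset.sum_congr rfl fun i _ => by rw [hPval i]).symm
  obtain ⟨C, hCsymm, P, hP, hdFeq⟩ := hdF.1
  have hCh : C.IsHermitian := by
    rw [Matrix.IsHermitian, Matrix.conjTranspose_eq_transpose_of_trivial]
    exact hCsymm
  set e := hCh.eigenvalues with he
  set τ := Tuple.sort e with hτ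
  set mu : Fin m → ℝ := e ∘ τ with hmu
  have hmu_mono : Monotone mu := Tuple.monotone_sort e
  have h1 : ∑ i, Real.sqrt (∑ a, (Λ i a - mu a) ^ 2) ≤ dF := by
    rw [hdFeq]
    refine Finset.sum_le_sum fun i _ => Real.sqrt_le_sqrt ?_
    exact hw_ineq (hA i) hCh (Λ i) mu (hΛ_mono i) hmu_mono (σs i) τ (hσs i)
      (fun a => rfl) (hP i).1 (hP i).2
  have h2 : dF ≤ ∑ i, Real.sqrt (∑ a, (Λ i a - mu a) ^ 2) := hlb mu
  constructor
  · exact ⟨mu, le_antisymm h2 h1⟩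
  · rintro y ⟨ΛC, rfl⟩
    exact hlb ΛC
end

section
/- Let A₁,...,A_n be real symmetric m×m matrices with sorted eigenvalue vectors Λ_{A_i} ∈ ℝ^m. Let d_𝒢(A_{1:n}) = min over alignment-consistent families of orthogonal matrices {P_{i,j}} of (1/2)Σ_{i,j∈[n]} ⦀A_i P_{i,j} − P_{i,j} A_j⦀_F. Then d_𝒢(A_{1:n}) = (1/2) Σ_{i,j∈[n]} ‖Λ_{A_i} − Λ_{A_j}‖₂. -/
open Matrix

namespace GAlignAux

variable {m : ℕ}

noncomputable def Q (M : Matrix (Fin m) (Fin m) ℝ) : ℝ := ∑ a, ∑ b, (M a b) ^ 2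

lemma Q_eq_trace (M : Matrix (Fin m) (Fin m) ℝ) : Q M = Matrix.trace (Mᵀ * M) := by
  unfold Q
  rw [Matrix.trace, Finset.sum_comm]
  apply Finset.sum_congr rfl
  intro b _
  simp [Matrix.diag, Matrix.mul_apply, sq]

lemma Q_conj {U V M : Matrix (Fin m) (Fin m) ℝ} (hU : Uᵀ * U = 1) (hV : V * Vᵀ = 1) :
    Q (U * M * V) = Q M := by
  rw [Q_eq_trace, Q_eq_trace]
  have h1 : (U * M * V)ᵀ * (U * M * V) = Vᵀ * (Mᵀ * M) * V := by
    calc (U * M * V)ᵀ * (U * M * V) = Vᵀ * Mᵀ * (Uᵀ * U) * M * V := by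
          rw [transpose_mul, transpose_mul]; noncomm_ring
      _ = Vᵀ * (Mᵀ * M) * V := by rw [hU]; noncomm_ring
  rw [h1, Matrix.trace_mul_comm, ← Matrix.mul_assoc, hV, one_mul]

lemma Q_diag (d : Fin m → ℝ) : Q (diagonal d) = ∑ a, d a ^ 2 := by
  unfold Q
  apply Finset.sum_congr rfl
  intro a _
  rw [Finset.sum_eq_single a]
  · simp
  · intro b _ hb
    simp [Matrix.diagonal_apply, Ne.symm hb]
  · simp

lemma conj_diag_apply (M : Matrix (Fin m) (Fin m) ℝ) (d : Fin m → ℝ) (a c : Fin m) :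
    (M * diagonal d * Mᵀ) a c = ∑ b, M a b * d b * M c b := by
  rw [Matrix.mul_apply]
  apply Finset.sum_congr rfl
  intro b _
  rw [Matrix.mul_diagonal, Matrix.transpose_apply]

lemma exists_decomp (A : Matrix (Fin m) (Fin m) ℝ) (hA : A.IsHermitian) (L : Fin m → ℝ)
    (h : ∃ σ : Equiv.Perm (Fin m), ∀ a, L a = hA.eigenvalues (σ a)) :
    ∃ V : Matrix (Fin m) (Fin m) ℝ, V * Vᵀ = 1 ∧ Vᵀ * V = 1 ∧ A = V * diagonal L * Vᵀ := by
  obtain ⟨σ, hσ⟩ := h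
  set U : Matrix (Fin m) (Fin m) ℝ := (hA.eigenvectorUnitary : Matrix (Fin m) (Fin m) ℝ) with hUdef
  have hstar : star U = Uᵀ := by
    rw [Matrix.star_eq_conjTranspose, Matrix.conjTranspose_eq_transpose_of_trivial]
  have hmem := hA.eigenvectorUnitary.2
  rw [Unitary.mem_iff] at hmem
  have hUtU : Uᵀ * U = 1 := by rw [← hstar]; exact hmem.1
  have hUUt : U * Uᵀ = 1 := by rw [← hstar]; exact hmem.2
  have hspec : A = U * diagonal hA.eigenvalues * Uᵀ := by
    have := hA.spectral_theorem
    rw [Unitary.conjStarAlgAut_apply] at this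
    rwa [hstar, RCLike.ofReal_real_eq_id, Function.id_comp] at this
  refine ⟨Matrix.of fun a b => U a (σ b), ?_, ?_, ?_⟩
  · ext a c
    have h1 : ∀ b, (U * Uᵀ) a b = (1 : Matrix (Fin m) (Fin m) ℝ) a b := fun b => by rw [hUUt]
    have h2 := h1 c
    simp only [Matrix.mul_apply, Matrix.transpose_apply] at h2 ⊢
    rw [← h2]
    exact Equiv.sum_comp σ (fun b => U a b * U c b)
  · ext b c
    have h2 : (Uᵀ * U) (σ b) (σ c) = (1 : Matrix (Fin m) (Fin m) ℝ) (σ b) (σ c) := by rw [hUtU]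
    simp only [Matrix.mul_apply, Matrix.transpose_apply, Matrix.one_apply] at h2 ⊢
    simp only [Matrix.of_apply]
    rw [h2]
    simp [EmbeddingLike.apply_eq_iff_eq]
  · ext a c
    rw [hspec, conj_diag_apply, conj_diag_apply]
    rw [← Equiv.sum_comp σ (fun b => U a b * hA.eigenvalues b * U c b)]
    apply Finset.sum_congr rfl
    intro b _
    simp only [Matrix.of_apply]
    rw [hσ b]

lemma rearr {Li Lj : Fin m → ℝ} (hi : Monotone Li) (hj : Monotone Lj) (σ : Equiv.Perm (Fin m)) :
    ∑ a, (Li a - Lj a) ^ 2 ≤ ∑ a, (Li a - Lj (σ a)) ^ 2 := by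
  have key : ∑ a, Li a * Lj (σ a) ≤ ∑ a, Li a * Lj a :=
    (hi.monovary hj).sum_mul_comp_perm_le_sum_mul
  have h2 : ∑ a, (Lj (σ a)) ^ 2 = ∑ a, (Lj a) ^ 2 := Equiv.sum_comp σ (fun a => (Lj a) ^ 2)
  have e1 : ∑ a, (Li a - Lj a) ^ 2
      = ∑ a, (Li a) ^ 2 - 2 * ∑ a, Li a * Lj a + ∑ a, (Lj a) ^ 2 := by
    rw [Finset.mul_sum, ← Finset.sum_sub_distrib, ← Finset.sum_add_distrib]
    apply Finset.sum_congr rfl; intro a _; ring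
  have e2 : ∑ a, (Li a - Lj (σ a)) ^ 2
      = ∑ a, (Li a) ^ 2 - 2 * ∑ a, Li a * Lj (σ a) + ∑ a, (Lj (σ a)) ^ 2 := by
    rw [Finset.mul_sum, ← Finset.sum_sub_distrib, ← Finset.sum_add_distrib]
    apply Finset.sum_congr rfl; intro a _; ring
  rw [e1, e2, h2]
  linarith

lemma pair_lower {Li Lj : Fin m → ℝ} (hi : Monotone Li) (hj : Monotone Lj)
    {W : Matrix (Fin m) (Fin m) ℝ} (hW1 : W * Wᵀ = 1) (hW2 : Wᵀ * W = 1) :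
    ∑ a, (Li a - Lj a) ^ 2 ≤ ∑ a, ∑ b, ((Li a - Lj b) * W a b) ^ 2 := by
  set S : Matrix (Fin m) (Fin m) ℝ := Matrix.of fun a b => (W a b) ^ 2 with hSdef
  have hS : S ∈ doublyStochastic ℝ (Fin m) := by
    rw [mem_doublyStochastic_iff_sum]
    refine ⟨fun i j => sq_nonneg _, fun a => ?_, fun b => ?_⟩
    · have h1 : (W * Wᵀ) a a = (1 : Matrix (Fin m) (Fin m) ℝ) a a := by rw [hW1]
      simp only [Matrix.mul_apply, Matrix.transpose_apply, Matrix.one_apply_eq] at h1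
      rw [← h1]; apply Finset.sum_congr rfl; intro b _; simp [hSdef, sq]
    · have h1 : (Wᵀ * W) b b = (1 : Matrix (Fin m) (Fin m) ℝ) b b := by rw [hW2]
      simp only [Matrix.mul_apply, Matrix.transpose_apply, Matrix.one_apply_eq] at h1
      rw [← h1]; apply Finset.sum_congr rfl; intro a _; simp [hSdef, sq]
  obtain ⟨w, hw0, hw1, hwS⟩ := exists_eq_sum_perm_of_mem_doublyStochastic hS
  have hSab : ∀ a b, S a b = ∑ σ : Equiv.Perm (Fin m), w σ * (σ.permMatrix ℝ) a b := by
    intro a b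
    rw [← hwS]
    simp [Matrix.sum_apply, Matrix.smul_apply, smul_eq_mul]
  have hperm : ∀ (σ : Equiv.Perm (Fin m)) a b,
      (σ.permMatrix ℝ) a b = if σ a = b then 1 else 0 := by
    intro σ a b
    simp [Equiv.Perm.permMatrix, PEquiv.toMatrix_apply, Equiv.toPEquiv_apply, Option.mem_def,
      eq_comm]
  calc ∑ a, (Li a - Lj a) ^ 2
      = ∑ σ : Equiv.Perm (Fin m), w σ * ∑ a, (Li a - Lj a) ^ 2 := by
        rw [← Finset.sum_mul, hw1, one_mul]
    _ ≤ ∑ σ : Equiv.Perm (Fin m), w σ * ∑ a, (Li a - Lj (σ a)) ^ 2 := by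
        apply Finset.sum_le_sum
        intro σ _
        exact mul_le_mul_of_nonneg_left (rearr hi hj σ) (hw0 σ)
    _ = ∑ a, ∑ b, ((Li a - Lj b) * W a b) ^ 2 := by
        symm
        have hc : ∀ a b, ((Li a - Lj b) * W a b) ^ 2 = (Li a - Lj b) ^ 2 * S a b := by
          intro a b; simp [hSdef, mul_pow]
        calc ∑ a, ∑ b, ((Li a - Lj b) * W a b) ^ 2
            = ∑ a, ∑ b, ∑ σ : Equiv.Perm (Fin m),
                (Li a - Lj b) ^ 2 * (w σ * (σ.permMatrix ℝ) a b) := by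
              apply Finset.sum_congr rfl; intro a _
              apply Finset.sum_congr rfl; intro b _
              rw [hc, hSab, Finset.mul_sum]
          _ = ∑ a, ∑ σ : Equiv.Perm (Fin m), ∑ b,
                (Li a - Lj b) ^ 2 * (w σ * (σ.permMatrix ℝ) a b) :=
              Finset.sum_congr rfl (fun a _ => Finset.sum_comm)
          _ = ∑ σ : Equiv.Perm (Fin m), ∑ a, ∑ b,
                (Li a - Lj b) ^ 2 * (w σ * (σ.permMatrix ℝ) a b) := Finset.sum_comm
          _ = ∑ σ : Equiv.Perm (Fin m), w σ * ∑ a, (Li a - Lj (σ a)) ^ 2 := by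
              apply Finset.sum_congr rfl; intro σ _
              rw [Finset.mul_sum]
              apply Finset.sum_congr rfl; intro a _
              simp only [hperm, mul_ite, mul_one, mul_zero, Finset.sum_ite_eq, Finset.mem_univ,
                if_true]
              ring

lemma upper_pair {Ai Aj Vi Vj : Matrix (Fin m) (Fin m) ℝ} {Li Lj : Fin m → ℝ}
    (hVi1 : Vi * Viᵀ = 1) (hVi2 : Viᵀ * Vi = 1) (hVj1 : Vj * Vjᵀ = 1) (hVj2 : Vjᵀ * Vj = 1)
    (hAi : Ai = Vi * diagonal Li * Viᵀ) (hAj : Aj = Vj * diagonal Lj * Vjᵀ) :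
    ∑ a, ∑ b, ((Ai * (Vi * Vjᵀ) - (Vi * Vjᵀ) * Aj) a b) ^ 2 = ∑ a, (Li a - Lj a) ^ 2 := by
  have hdd : diagonal (fun a => Li a - Lj a) = diagonal Li - diagonal Lj := by
    ext a b
    by_cases h : a = b <;> simp [Matrix.diagonal_apply, h]
  have key : Ai * (Vi * Vjᵀ) - (Vi * Vjᵀ) * Aj
      = Vi * diagonal (fun a => Li a - Lj a) * Vjᵀ := by
    rw [hAi, hAj, hdd]
    calc Vi * diagonal Li * Viᵀ * (Vi * Vjᵀ) - Vi * Vjᵀ * (Vj * diagonal Lj * Vjᵀ)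
        = Vi * diagonal Li * (Viᵀ * Vi) * Vjᵀ - Vi * (Vjᵀ * Vj) * diagonal Lj * Vjᵀ := by
          noncomm_ring
      _ = Vi * (diagonal Li - diagonal Lj) * Vjᵀ := by rw [hVi2, hVj2]; noncomm_ring
  rw [key]
  have hq : Q (Vi * diagonal (fun a => Li a - Lj a) * Vjᵀ)
      = Q (diagonal (fun a => Li a - Lj a)) :=
    Q_conj hVi2 (by rw [transpose_transpose]; exact hVj2)
  rw [show ∑ a, ∑ b, ((Vi * diagonal (fun a => Li a - Lj a) * Vjᵀ) a b) ^ 2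
      = Q (Vi * diagonal (fun a => Li a - Lj a) * Vjᵀ) from rfl, hq, Q_diag]

lemma lower_pair {Ai Aj P Vi Vj : Matrix (Fin m) (Fin m) ℝ} {Li Lj : Fin m → ℝ}
    (hi : Monotone Li) (hj : Monotone Lj)
    (hVi1 : Vi * Viᵀ = 1) (hVi2 : Viᵀ * Vi = 1) (hVj1 : Vj * Vjᵀ = 1) (hVj2 : Vjᵀ * Vj = 1)
    (hAi : Ai = Vi * diagonal Li * Viᵀ) (hAj : Aj = Vj * diagonal Lj * Vjᵀ)
    (hP1 : P * Pᵀ = 1) (hP2 : Pᵀ * P = 1) :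
    ∑ a, (Li a - Lj a) ^ 2 ≤ ∑ a, ∑ b, ((Ai * P - P * Aj) a b) ^ 2 := by
  set W := Viᵀ * P * Vj with hWdef
  have hWt : Wᵀ = Vjᵀ * Pᵀ * Vi := by
    rw [hWdef]; simp [Matrix.transpose_mul, Matrix.mul_assoc]
  have hW1 : W * Wᵀ = 1 := by
    rw [hWdef, hWt]
    calc Viᵀ * P * Vj * (Vjᵀ * Pᵀ * Vi) = Viᵀ * (P * (Vj * Vjᵀ) * Pᵀ) * Vi := by noncomm_ring
      _ = 1 := by rw [hVj1, mul_one, hP1, mul_one, hVi2]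
  have hW2 : Wᵀ * W = 1 := by
    rw [hWdef, hWt]
    calc Vjᵀ * Pᵀ * Vi * (Viᵀ * P * Vj) = Vjᵀ * (Pᵀ * (Vi * Viᵀ) * P) * Vj := by noncomm_ring
      _ = 1 := by rw [hVi1, mul_one, hP2, mul_one, hVj2]
  have key : Ai * P - P * Aj = Vi * (diagonal Li * W - W * diagonal Lj) * Vjᵀ := by
    rw [hAi, hAj, hWdef]
    calc Vi * diagonal Li * Viᵀ * P - P * (Vj * diagonal Lj * Vjᵀ)
        = Vi * diagonal Li * Viᵀ * P * (Vj * Vjᵀ)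
            - (Vi * Viᵀ) * (P * (Vj * diagonal Lj * Vjᵀ)) := by
          rw [hVj1, hVi1]; noncomm_ring
      _ = Vi * (diagonal Li * (Viᵀ * P * Vj) - (Viᵀ * P * Vj) * diagonal Lj) * Vjᵀ := by
          noncomm_ring
  rw [key]
  have hq : ∑ a, ∑ b, ((Vi * (diagonal Li * W - W * diagonal Lj) * Vjᵀ) a b) ^ 2
      = Q (diagonal Li * W - W * diagonal Lj) :=
    Q_conj hVi2 (by rw [transpose_transpose]; exact hVj2)
  rw [hq]
  have hent : Q (diagonal Li * W - W * diagonal Lj)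
      = ∑ a, ∑ b, ((Li a - Lj b) * W a b) ^ 2 := by
    unfold Q
    apply Finset.sum_congr rfl; intro a _
    apply Finset.sum_congr rfl; intro b _
    rw [Matrix.sub_apply, Matrix.diagonal_mul, Matrix.mul_diagonal]
    ring
  rw [hent]
  exact pair_lower hi hj hW1 hW2

end GAlignAux

open GAlignAux in
/-- For real symmetric matrices compared with alignment-consistent orthogonal
families and the Frobenius norm, the 𝒢-align distance equals half the sum of
pairwise Euclidean distances between the sorted eigenvalue spectra. -/
theorem G_align_orthogonal_spectra {m n : ℕ}
    (A : Fin n → Matrix (Fin m) (Fin m) ℝ)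
    (hA : ∀ i, (A i).IsHermitian)
    (Λ : Fin n → Fin m → ℝ)
    (hΛ_mono : ∀ i, Monotone (Λ i))
    (hΛ : ∀ i, ∃ σ : Equiv.Perm (Fin m), ∀ a, Λ i a = (hA i).eigenvalues (σ a))
    (dG : ℝ)
    (hdG : IsLeast {x : ℝ | ∃ P : Fin n → Fin n → Matrix (Fin m) (Fin m) ℝ,
        (∀ i j, P i j * (P i j)ᵀ = 1 ∧ (P i j)ᵀ * P i j = 1) ∧
        (∀ i j k, P i k * P k j = P i j) ∧ (∀ i, P i i = 1) ∧
        x = (1 / 2) * ∑ i, ∑ j,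
          Real.sqrt (∑ a, ∑ b, ((A i * P i j - P i j * A j) a b) ^ 2)} dG) :
    dG = (1 / 2) * ∑ i, ∑ j, Real.sqrt (∑ a, (Λ i a - Λ j a) ^ 2) := by
  classical
  choose V hV1 hV2 hV3 using fun i => exists_decomp (A i) (hA i) (Λ i) (hΛ i)
  have hmem : (1 / 2) * ∑ i, ∑ j, Real.sqrt (∑ a, (Λ i a - Λ j a) ^ 2) ∈
      {x : ℝ | ∃ P : Fin n → Fin n → Matrix (Fin m) (Fin m) ℝ,
        (∀ i j, P i j * (P i j)ᵀ = 1 ∧ (P i j)ᵀ * P i j = 1) ∧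
        (∀ i j k, P i k * P k j = P i j) ∧ (∀ i, P i i = 1) ∧
        x = (1 / 2) * ∑ i, ∑ j,
          Real.sqrt (∑ a, ∑ b, ((A i * P i j - P i j * A j) a b) ^ 2)} := by
    refine ⟨fun i j => V i * (V j)ᵀ, fun i j => ⟨?_, ?_⟩, fun i j k => ?_, fun i => ?_, ?_⟩
    · calc V i * (V j)ᵀ * (V i * (V j)ᵀ)ᵀ = V i * ((V j)ᵀ * V j) * (V i)ᵀ := by
            rw [transpose_mul, transpose_transpose]; noncomm_ring
        _ = 1 := by rw [hV2 j, mul_one, hV1 i]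
    · calc (V i * (V j)ᵀ)ᵀ * (V i * (V j)ᵀ) = V j * ((V i)ᵀ * V i) * (V j)ᵀ := by
            rw [transpose_mul, transpose_transpose]; noncomm_ring
        _ = 1 := by rw [hV2 i, mul_one, hV1 j]
    · calc V i * (V k)ᵀ * (V k * (V j)ᵀ) = V i * ((V k)ᵀ * V k) * (V j)ᵀ := by noncomm_ring
        _ = V i * (V j)ᵀ := by rw [hV2 k, mul_one]
    · exact hV1 i
    · congr 1
      apply Finset.sum_congr rfl; intro i _
      apply Finset.sum_congr rfl; intro j _
      rw [upper_pair (hV1 i) (hV2 i) (hV1 j) (hV2 j) (hV3 i) (hV3 j)]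
  have upper : dG ≤ (1 / 2) * ∑ i, ∑ j, Real.sqrt (∑ a, (Λ i a - Λ j a) ^ 2) := hdG.2 hmem
  obtain ⟨P, hPo, hPc, hPid, hx⟩ := hdG.1
  have lower : (1 / 2) * ∑ i, ∑ j, Real.sqrt (∑ a, (Λ i a - Λ j a) ^ 2) ≤ dG := by
    rw [hx]
    apply mul_le_mul_of_nonneg_left _ (by norm_num)
    apply Finset.sum_le_sum; intro i _
    apply Finset.sum_le_sum; intro j _
    apply Real.sqrt_le_sqrt
    exact lower_pair (hΛ_mono i) (hΛ_mono j) (hV1 i) (hV2 i) (hV1 j) (hV2 j) (hV3 i) (hV3 j)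
      (hPo i j).1 (hPo i j).2
  linarith
end

section
/- Let {P_{i,j}}_{i,j∈[n]} be m×m invertible real matrices with P_{i,i} = I for all i, and let 𝐏 ∈ ℝ^{nm×nm} be the block matrix with (i,j)-th block P_{i,j}. Then rank(𝐏) = m if and only if the family is alignment-consistent, i.e., P_{i,k}P_{k,j} = P_{i,j} for all i,j,k ∈ [n]. -/
open Matrix

/-- Row-selector matrix: picks out the `i`-th block of rows. -/
noncomputable def Esel {m n : ℕ} (i : Fin n) : Matrix (Fin m) (Fin n × Fin m) ℝ :=
  fun a p => if p = (i, a) then 1 else 0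

lemma Esel_mul {m n : ℕ} (i : Fin n) {κ : Type*} [Fintype κ]
    (M : Matrix (Fin n × Fin m) κ ℝ) (a : Fin m) (q : κ) :
    ((Esel (m := m) i * M : Matrix (Fin m) κ ℝ)) a q = M (i, a) q := by
  simp [Matrix.mul_apply, Esel]

lemma mul_EselT {m n : ℕ} (j : Fin n) {κ : Type*} [Fintype κ]
    (M : Matrix κ (Fin n × Fin m) ℝ) (p : κ) (b : Fin m) :
    ((M * (Esel (m := m) j)ᵀ : Matrix κ (Fin m) ℝ)) p b = M p (j, b) := by
  simp [Matrix.mul_apply, Esel, Matrix.transpose_apply]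

/-- For a family of invertible matrices `P i j` with `P i i = 1`, the block
matrix `Pbig` (with `(i,j)`-block `P i j`) has rank `m` if and only if the family
is alignment-consistent. -/
theorem rank_block_matrix_iff_consistent {m n : ℕ} (hn : 0 < n)
    (P : Fin n → Fin n → Matrix (Fin m) (Fin m) ℝ)
    (hinv : ∀ i j, IsUnit (P i j))
    (hdiag : ∀ i, P i i = 1)
    (Pbig : Matrix (Fin n × Fin m) (Fin n × Fin m) ℝ)
    (hPbig : ∀ i j a b, Pbig (i, a) (j, b) = P i j a b) :
    Pbig.rank = m ↔ ∀ i j k, P i k * P k j = P i j := by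
  have hEPE : ∀ i j : Fin n, Esel (m := m) i * Pbig * (Esel (m := m) j)ᵀ = P i j := by
    intro i j
    ext a b
    rw [mul_EselT, Esel_mul, hPbig]
  constructor
  · intro hr i j k
    set C : Matrix (Fin n × Fin m) (Fin m) ℝ := Pbig * (Esel (m := m) k)ᵀ with hC
    have hEC : Esel (m := m) k * C = (1 : Matrix (Fin m) (Fin m) ℝ) := by
      rw [hC, ← Matrix.mul_assoc, hEPE, hdiag]
    have hCrank : C.rank = m := by
      refine le_antisymm (C.rank_le_card_width.trans (Fintype.card_fin m).le) ?_
      calc m = (1 : Matrix (Fin m) (Fin m) ℝ).rank := by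
              rw [Matrix.rank_one, Fintype.card_fin]
        _ = ((Esel (m := m) k * C : Matrix (Fin m) (Fin m) ℝ)).rank := by rw [hEC]
        _ ≤ C.rank := Matrix.rank_mul_le_right _ _
    have hle : LinearMap.range C.mulVecLin ≤ LinearMap.range Pbig.mulVecLin := by
      rw [hC, Matrix.mulVecLin_mul]
      exact LinearMap.range_comp_le_range _ _
    have hrange : LinearMap.range C.mulVecLin = LinearMap.range Pbig.mulVecLin := by
      refine Submodule.eq_of_le_of_finrank_le hle ?_
      show Pbig.rank ≤ C.rank
      rw [hr, hCrank]
    set B : Matrix (Fin n × Fin m) (Fin m) ℝ := Pbig * (Esel (m := m) j)ᵀ with hB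
    have hcol : ∀ b, ∃ w : Fin m → ℝ, C *ᵥ w = fun p => B p b := by
      intro b
      have hmem : (fun p => B p b) ∈ LinearMap.range Pbig.mulVecLin := by
        refine ⟨(Esel (m := m) j)ᵀ *ᵥ Pi.single b 1, ?_⟩
        show Pbig *ᵥ ((Esel (m := m) j)ᵀ *ᵥ Pi.single b 1) = _
        rw [Matrix.mulVec_mulVec, ← hB]
        funext p
        simp [Matrix.mulVec_single]
      rw [← hrange] at hmem
      exact hmem
    choose w hw using hcol
    set W : Matrix (Fin m) (Fin m) ℝ := fun a b => w b a with hWdef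
    have hCW : C * W = B := by
      ext p b
      have := congrFun (hw b) p
      rw [Matrix.mul_apply]
      simpa [Matrix.mul_apply, Matrix.mulVec, dotProduct, hWdef] using this
    have hW : W = P k j := by
      calc W = (Esel (m := m) k * C) * W := by rw [hEC, Matrix.one_mul]
        _ = Esel (m := m) k * B := by rw [Matrix.mul_assoc, hCW]
        _ = P k j := by rw [hB, ← Matrix.mul_assoc, hEPE]
    calc P i k * P k j = (Esel (m := m) i * C) * W := by
          rw [hW, hC, ← Matrix.mul_assoc, hEPE]
      _ = Esel (m := m) i * B := by rw [Matrix.mul_assoc, hCW]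
      _ = P i j := by rw [hB, ← Matrix.mul_assoc, hEPE]
  · intro hcons
    set k : Fin n := ⟨0, hn⟩
    have hfac : Pbig = (Pbig * (Esel (m := m) k)ᵀ : Matrix (Fin n × Fin m) (Fin m) ℝ) * (Esel (m := m) k * Pbig : Matrix (Fin m) (Fin n × Fin m) ℝ) := by
      ext ⟨i, a⟩ ⟨j, b⟩
      rw [Matrix.mul_apply]
      have h1 : ∀ c, ((Pbig * (Esel (m := m) k)ᵀ : Matrix (Fin n × Fin m) (Fin m) ℝ)) (i, a) c * ((Esel (m := m) k * Pbig : Matrix (Fin m) (Fin n × Fin m) ℝ)) c (j, b)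
          = P i k a c * P k j c b := by
        intro c
        rw [mul_EselT, Esel_mul, hPbig, hPbig]
      rw [Finset.sum_congr rfl (fun c _ => h1 c)]
      have h2 := congrFun (congrFun (hcons i j k) a) b
      rw [Matrix.mul_apply] at h2
      rw [h2, hPbig]
    have hone : Esel (m := m) k * Pbig * (Esel (m := m) k)ᵀ = (1 : Matrix (Fin m) (Fin m) ℝ) := by rw [hEPE, hdiag]
    refine le_antisymm ?_ ?_
    · calc Pbig.rank = ((Pbig * (Esel (m := m) k)ᵀ) * (Esel (m := m) k * Pbig)).rank := by rw [← hfac]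
        _ ≤ (Pbig * (Esel (m := m) k)ᵀ).rank := Matrix.rank_mul_le_left _ _
        _ ≤ m := (Pbig * (Esel (m := m) k)ᵀ).rank_le_card_width.trans (Fintype.card_fin m).le
    · calc m = (1 : Matrix (Fin m) (Fin m) ℝ).rank := by
            rw [Matrix.rank_one, Fintype.card_fin]
        _ = ((Esel (m := m) k * Pbig * (Esel (m := m) k)ᵀ : Matrix (Fin m) (Fin m) ℝ)).rank := by rw [hone]
        _ ≤ ((Esel (m := m) k * Pbig : Matrix (Fin m) (Fin n × Fin m) ℝ)).rank := Matrix.rank_mul_le_left _ _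
        _ ≤ Pbig.rank := Matrix.rank_mul_le_right _ _
end

section
/- Let {P_{i,j}}_{i,j∈[n]} be an alignment-consistent family of m×m orthogonal matrices (P_{i,k}P_{k,j} = P_{i,j}, P_{i,i} = I), and let 𝐏 ∈ ℝ^{nm×nm} be the block matrix with (i,j)-th block P_{i,j}. Then 𝐏 = AAᵀ for A = [P_{1,n}; ...; P_{n,n}] ∈ ℝ^{nm×m}, 𝐏 is positive semidefinite, and its nuclear norm equals mn. -/
open Matrix

/-- The nuclear norm of a real square matrix. -/
noncomputable def nuclearNorm {ι : Type*} [Fintype ι] [DecidableEq ι]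
    (M : Matrix ι ι ℝ) : ℝ :=
  ∑ i, Real.sqrt ((show (Mᵀ * M).IsHermitian by
    rw [IsHermitian, conjTranspose_eq_transpose_of_trivial, transpose_mul,
      transpose_transpose]).eigenvalues i)

lemma sum_eigenvalues_eq_trace' {ι : Type*} [Fintype ι] [DecidableEq ι]
    {M : Matrix ι ι ℝ} (hM : M.IsHermitian) :
    ∑ i, hM.eigenvalues i = M.trace := by
  rw [hM.trace_eq_sum_eigenvalues]
  simp

/-- For an alignment-consistent family of orthogonal matrices, the block matrix
`𝐏` factors as `A Aᵀ` with `A = [P_{1,n}; ...; P_{n,n}]`, is positive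
semidefinite, and has nuclear norm `m * n`. -/
theorem block_matrix_of_consistent_orthogonal {m n : ℕ}
    (P : Fin n → Fin n → Matrix (Fin m) (Fin m) ℝ)
    (horth : ∀ i j, P i j * (P i j)ᵀ = 1 ∧ (P i j)ᵀ * P i j = 1)
    (hcons : ∀ i j k, P i k * P k j = P i j)
    (hdiag : ∀ i, P i i = 1)
    (j₀ : Fin n) (hj₀ : (j₀ : ℕ) = n - 1)
    (Pbig : Matrix (Fin n × Fin m) (Fin n × Fin m) ℝ)
    (hPbig : ∀ i j a b, Pbig (i, a) (j, b) = P i j a b)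
    (Amat : Matrix (Fin n × Fin m) (Fin m) ℝ)
    (hAmat : ∀ i a b, Amat (i, a) b = P i j₀ a b) :
    Pbig = Amat * Amatᵀ ∧ Pbig.PosSemidef ∧ nuclearNorm Pbig = m * n := by
  have hnpos : 0 < n := j₀.pos
  -- transpose of block
  have htr : ∀ i j : Fin n, (P i j)ᵀ = P j i := by
    intro i j
    calc (P i j)ᵀ = (P i j)ᵀ * (P i j * P j i) := by rw [hcons i i j, hdiag, mul_one]
    _ = ((P i j)ᵀ * P i j) * P j i := by rw [mul_assoc]
    _ = P j i := by rw [(horth i j).2, one_mul]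
  -- factorization
  have hfac : Pbig = Amat * Amatᵀ := by
    ext ⟨i, a⟩ ⟨j, b⟩
    have : (Amat * Amatᵀ) (i, a) (j, b) = (P i j₀ * (P j j₀)ᵀ) a b := by
      simp only [Matrix.mul_apply, Matrix.transpose_apply, hAmat]
    rw [this, htr, hcons, hPbig]
  -- positive semidefinite
  have hpsd : Pbig.PosSemidef := by
    rw [hfac]
    have hc : Amatᴴ = Amatᵀ := Matrix.conjTranspose_eq_transpose_of_trivial Amat
    rw [← hc]
    exact Matrix.posSemidef_self_mul_conjTranspose Amat
  refine ⟨hfac, hpsd, ?_⟩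
  -- symmetry of Pbig
  have hsym : Pbigᵀ = Pbig := by
    ext ⟨i, a⟩ ⟨j, b⟩
    rw [Matrix.transpose_apply, hPbig, hPbig, ← htr i j, Matrix.transpose_apply]
  -- Pbig * Pbig = n • Pbig
  have hsq : Pbig * Pbig = (n : ℝ) • Pbig := by
    ext ⟨i, a⟩ ⟨j, b⟩
    have : (Pbig * Pbig) (i, a) (j, b) = ∑ k : Fin n, (P i k * P k j) a b := by
      rw [Matrix.mul_apply, Fintype.sum_prod_type]
      refine Finset.sum_congr rfl fun k _ => ?_
      rw [Matrix.mul_apply]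
      exact Finset.sum_congr rfl fun c _ => by rw [hPbig, hPbig]
    rw [this]
    simp [hcons, hPbig, mul_comm]
  set M := Pbigᵀ * Pbig with hM
  have hMeq : M = (n : ℝ) • Pbig := by rw [hM, hsym, hsq]
  have hH : (Pbigᵀ * Pbig).IsHermitian := by
    rw [IsHermitian, conjTranspose_eq_transpose_of_trivial, transpose_mul,
      transpose_transpose]
  -- M * M = n^2 • M
  have hMM : M * M = ((n : ℝ)^2) • M := by
    calc M * M = ((n:ℝ) • Pbig) * ((n:ℝ) • Pbig) := by rw [hMeq]
    _ = ((n:ℝ) * (n:ℝ)) • (Pbig * Pbig) := by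
        rw [Matrix.smul_mul, Matrix.mul_smul, smul_smul]
    _ = (((n:ℝ) * (n:ℝ)) * (n:ℝ)) • Pbig := by rw [hsq, smul_smul]
    _ = ((n : ℝ)^2) • M := by rw [hMeq, smul_smul]; congr 1; ring
  -- eigenvalues of M are 0 or n^2
  have heig : ∀ i, hH.eigenvalues i = 0 ∨ hH.eigenvalues i = (n : ℝ)^2 := by
    intro i
    set v := ⇑(hH.eigenvectorBasis i) with hv
    set lam := hH.eigenvalues i with hlam
    have hv1 : M *ᵥ v = lam • v := hH.mulVec_eigenvectorBasis i
    have hvne : v ≠ 0 := by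
      have := hH.eigenvectorBasis.orthonormal.ne_zero i
      intro h
      apply this
      ext x
      exact congrFun h x
    have h2 : (lam * lam) • v = ((n : ℝ)^2 * lam) • v := by
      have e1 : (M * M) *ᵥ v = (lam * lam) • v := by
        rw [← Matrix.mulVec_mulVec, hv1, Matrix.mulVec_smul, hv1, smul_smul]
      have e2 : (M * M) *ᵥ v = ((n : ℝ)^2 * lam) • v := by
        rw [hMM, Matrix.smul_mulVec, hv1, smul_smul]
      rw [← e1, e2]
    have h3 : lam * lam = (n : ℝ)^2 * lam := by
      by_contra hne
      apply hvne
      have := sub_eq_zero.2 h2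
      rw [← sub_smul] at this
      rcases smul_eq_zero.1 this with h | h
      · exact absurd (sub_eq_zero.1 h) hne
      · exact h
    rcases eq_or_ne lam 0 with h | h
    · exact Or.inl h
    · exact Or.inr (mul_right_cancel₀ h h3)
  -- nuclear norm computation
  have hnn : ∀ i, Real.sqrt (hH.eigenvalues i) = hH.eigenvalues i / n := by
    intro i
    rcases heig i with h | h
    · simp [h]
    · rw [h, Real.sqrt_sq (by positivity)]
      field_simp
  have htrP : Pbig.trace = (n : ℝ) * m := by
    have hone : ∀ (i : Fin n) (a : Fin m), Pbig (i, a) (i, a) = 1 := by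
      intro i a
      rw [hPbig, hdiag]
      simp
    rw [Matrix.trace, Fintype.sum_prod_type]
    simp only [Matrix.diag_apply, hone]
    simp [mul_comm]
  have htrM : M.trace = (n : ℝ)^2 * m := by
    rw [hMeq, Matrix.trace_smul, htrP, sq]
    simp [mul_assoc]
  unfold nuclearNorm
  rw [Finset.sum_congr rfl (fun i _ => hnn i), ← Finset.sum_div,
    sum_eigenvalues_eq_trace' hH]
  have hre : (Pbigᵀ * Pbig).trace = M.trace := rfl
  rw [hre, htrM]
  have hne : (n : ℝ) ≠ 0 := Nat.cast_ne_zero.2 hnpos.ne'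
  field_simp
end

section
/- Let s be a modified P-score on Ω² × 𝒫, where 𝒫 is closed under transposition and multiplication, contains I, and every P ∈ 𝒫 has operator 2-norm at most 1. Then the symmetric continuous 𝒢-align function d_{sc𝒢}(A_{1:n}) = min over {P_{i,j} ∈ 𝒫 : P_{i,i} = I, block matrix 𝐏 ⪰ 0} of (1/2)Σ_{i,j∈[n]} s(A_i,A_j,P_{i,j}) is a pseudo n-metric: non-negative, permutation-symmetric, d_{sc𝒢}(A,...,A) = 0, and satisfies the generalized triangle inequality d_{sc𝒢}(A_{1:n}) ≤ Σ_{ℓ=1}^n d_{sc𝒢}(A^ℓ_{1:n,n+1}). -/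
open Matrix
open scoped Matrix.Norms.L2Operator


lemma dot_sq_le {m : ℕ} (Γ : Matrix (Fin m) (Fin m) ℝ) (h : ‖Γ‖ ≤ 1) (x : Fin m → ℝ) :
    (Γᵀ *ᵥ x) ⬝ᵥ (Γᵀ *ᵥ x) ≤ x ⬝ᵥ x := by
  have key : ∀ y : Fin m → ℝ, y ⬝ᵥ y = ‖(EuclideanSpace.equiv (Fin m) ℝ).symm y‖ ^ 2 := by
    intro y
    rw [EuclideanSpace.norm_eq, Real.sq_sqrt (by positivity)]
    simp [dotProduct, sq, Real.norm_eq_abs, abs_mul_abs_self]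
  rw [key, key]
  have h1 : ‖Γᵀ‖ ≤ 1 := by
    have := Matrix.l2_opNorm_conjTranspose Γ
    rw [Matrix.conjTranspose_eq_transpose_of_trivial] at this
    rw [this]; exact h
  have h2 := Matrix.l2_opNorm_mulVec Γᵀ ((EuclideanSpace.equiv (Fin m) ℝ).symm x)
  have h3 : ‖(EuclideanSpace.equiv (Fin m) ℝ).symm (Γᵀ *ᵥ x)‖ ≤
      ‖(EuclideanSpace.equiv (Fin m) ℝ).symm x‖ := by
    refine h2.trans ?_
    nlinarith [norm_nonneg ((EuclideanSpace.equiv (Fin m) ℝ).symm x), norm_nonneg Γᵀ]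
  exact pow_le_pow_left₀ (norm_nonneg _) h3 2

lemma one_sub_psd {m : ℕ} (Γ : Matrix (Fin m) (Fin m) ℝ) (h : ‖Γ‖ ≤ 1) :
    (1 - Γ * Γᵀ).PosSemidef := by
  rw [posSemidef_iff_dotProduct_mulVec]
  constructor
  · unfold Matrix.IsHermitian
    rw [conjTranspose_eq_transpose_of_trivial]
    simp [Matrix.transpose_sub, Matrix.transpose_mul]
  · intro x
    simp only [Matrix.sub_mulVec, dotProduct_sub, Matrix.one_mulVec, star_trivial]
    have : (Γ * Γᵀ) *ᵥ x = Γ *ᵥ (Γᵀ *ᵥ x) := by rw [Matrix.mulVec_mulVec]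
    rw [this]
    have : x ⬝ᵥ (Γ *ᵥ (Γᵀ *ᵥ x)) = (Γᵀ *ᵥ x) ⬝ᵥ (Γᵀ *ᵥ x) := by
      rw [Matrix.dotProduct_mulVec, ← Matrix.mulVec_transpose]
    rw [this]
    linarith [dot_sq_le Γ h x]


lemma block_psd {n m : ℕ} (Γ : Fin n → Matrix (Fin m) (Fin m) ℝ)
    (hΓ : ∀ i, ‖Γ i‖ ≤ 1) :
    (Matrix.of fun p q : Fin n × Fin m =>
      (if p.1 = q.1 then (1 : Matrix (Fin m) (Fin m) ℝ) else Γ p.1 * (Γ q.1)ᵀ) p.2 q.2).PosSemidef := by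
  set B : Matrix (Fin n × Fin m) (Fin m) ℝ := Matrix.of fun p r => Γ p.1 p.2 r with hB
  set D : Matrix (Fin n × Fin m) (Fin n × Fin m) ℝ := Matrix.of fun p q =>
    if p.1 = q.1 then (1 - Γ p.1 * (Γ p.1)ᵀ) p.2 q.2 else 0 with hD
  have hM : (Matrix.of fun p q : Fin n × Fin m =>
      (if p.1 = q.1 then (1 : Matrix (Fin m) (Fin m) ℝ) else Γ p.1 * (Γ q.1)ᵀ) p.2 q.2)
      = B * Bᵀ + D := by
    ext p q
    simp only [Matrix.add_apply, Matrix.mul_apply, Matrix.of_apply, Matrix.transpose_apply, hB, hD]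
    by_cases h : p.1 = q.1
    · rw [if_pos h, if_pos h, h]
      simp [Matrix.sub_apply, Matrix.mul_apply, Matrix.one_apply]
    · simp [h, Matrix.mul_apply]
  rw [hM]
  apply Matrix.PosSemidef.add
  · have := Matrix.posSemidef_self_mul_conjTranspose B
    rwa [Matrix.conjTranspose_eq_transpose_of_trivial] at this
  rw [posSemidef_iff_dotProduct_mulVec]
  constructor
  · show Dᴴ = D
    ext p q
    simp only [hD, Matrix.conjTranspose_apply, Matrix.of_apply, star_trivial]
    by_cases h : p.1 = q.1
    · rw [if_pos h, if_pos h.symm, h]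
      exact congrFun (congrFun (one_sub_psd (Γ q.1) (hΓ q.1)).1.symm q.2) p.2
    · rw [if_neg h, if_neg (fun hh => h hh.symm)]
  · intro x
    have hmv : ∀ p : Fin n × Fin m, (D *ᵥ x) p
        = ∑ l : Fin m, (1 - Γ p.1 * (Γ p.1)ᵀ) p.2 l * x (p.1, l) := by
      intro p
      rw [Matrix.mulVec, dotProduct, Fintype.sum_prod_type]
      rw [Finset.sum_eq_single p.1]
      · simp [hD]
      · intro j _ hj
        simp only [hD, Matrix.of_apply, if_neg (Ne.symm hj)]
        simp
      · simp
    rw [dotProduct, Fintype.sum_prod_type]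
    simp only [star_trivial]
    refine Finset.sum_nonneg fun i _ => ?_
    have h2 := (one_sub_psd (Γ i) (hΓ i)).dotProduct_mulVec_nonneg (fun k => x (i, k))
    simp only [star_trivial, dotProduct, Matrix.mulVec] at h2
    simp only [hmv]
    simpa using h2


/-- If `s` is a modified P-score (with `𝓟` closed under transposition and
multiplication, containing `I`, and consisting of operator-norm contractions),
then the symmetric continuous 𝒢-align function `d_{sc𝒢}` is a pseudo
`n`-metric. -/
theorem sym_cont_G_align_is_pseudo_n_metric {m n : ℕ} {Ω : Type*}
    (𝓟 : Set (Matrix (Fin m) (Fin m) ℝ))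
    (hI : (1 : Matrix (Fin m) (Fin m) ℝ) ∈ 𝓟)
    (htrans : ∀ P ∈ 𝓟, Pᵀ ∈ 𝓟)
    (hmul : ∀ P ∈ 𝓟, ∀ Q ∈ 𝓟, P * Q ∈ 𝓟)
    (hnorm : ∀ P ∈ 𝓟, ‖P‖ ≤ 1)
    (s : Ω → Ω → Matrix (Fin m) (Fin m) ℝ → ℝ)
    (hs_nonneg : ∀ A B P, 0 ≤ s A B P)
    (hs_id : ∀ A, s A A 1 = 0)
    (hs_symm : ∀ A B P, s A B P = s B A Pᵀ)
    (hs_tri : ∀ A B C P P', s A C (P * P') ≤ s A B P + s B C P')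
    (dG : (Fin n → Ω) → ℝ)
    (hdG : ∀ A : Fin n → Ω, IsLeast
      {x : ℝ | ∃ P : Fin n → Fin n → Matrix (Fin m) (Fin m) ℝ,
        (∀ i j, P i j ∈ 𝓟) ∧ (∀ i, P i i = 1) ∧
        (Matrix.of fun p q : Fin n × Fin m => P p.1 q.1 p.2 q.2).PosSemidef ∧
        x = (1 / 2) * ∑ i : Fin n, ∑ j : Fin n, s (A i) (A j) (P i j)} (dG A)) :
    (∀ A : Fin n → Ω, 0 ≤ dG A) ∧
    (∀ (A : Fin n → Ω) (σ : Equiv.Perm (Fin n)), dG (A ∘ σ) = dG A) ∧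
    (∀ A : Ω, dG (fun _ => A) = 0) ∧
    (∀ (A : Fin n → Ω) (A' : Ω), dG A ≤ ∑ ℓ : Fin n, dG (Function.update A ℓ A')) := by
  -- Part 1
  have nonneg : ∀ A : Fin n → Ω, 0 ≤ dG A := by
    intro A
    obtain ⟨P, -, -, -, hx⟩ := (hdG A).1
    rw [hx]
    have : (0:ℝ) ≤ ∑ i : Fin n, ∑ j : Fin n, s (A i) (A j) (P i j) :=
      Finset.sum_nonneg fun i _ => Finset.sum_nonneg fun j _ => hs_nonneg _ _ _
    linarith
  -- permutation
  have key : ∀ (A : Fin n → Ω) (σ : Equiv.Perm (Fin n)), dG (A ∘ σ) ≤ dG A := by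
    intro A σ
    obtain ⟨P, h1, h2, h3, h4⟩ := (hdG A).1
    refine (hdG (A ∘ σ)).2 ⟨fun k l => P (σ k) (σ l), fun k l => h1 _ _, fun k => h2 _, ?_, ?_⟩
    · have : (Matrix.of fun p q : Fin n × Fin m => P (σ p.1) (σ q.1) p.2 q.2)
          = (Matrix.of fun p q : Fin n × Fin m => P p.1 q.1 p.2 q.2).submatrix
            (fun p : Fin n × Fin m => (σ p.1, p.2)) (fun p : Fin n × Fin m => (σ p.1, p.2)) := by
        ext p q; rfl
      rw [this]
      exact h3.submatrix _
    · rw [h4]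
      congr 1
      calc ∑ i : Fin n, ∑ j : Fin n, s (A i) (A j) (P i j)
          = ∑ k : Fin n, ∑ j : Fin n, s (A (σ k)) (A j) (P (σ k) j) :=
            (Equiv.sum_comp σ (fun i => ∑ j : Fin n, s (A i) (A j) (P i j))).symm
        _ = ∑ k : Fin n, ∑ l : Fin n, s (A (σ k)) (A (σ l)) (P (σ k) (σ l)) :=
            Finset.sum_congr rfl fun k _ =>
              (Equiv.sum_comp σ (fun j => s (A (σ k)) (A j) (P (σ k) j))).symm
        _ = ∑ k : Fin n, ∑ l : Fin n, s ((A ∘ σ) k) ((A ∘ σ) l) (P (σ k) (σ l)) := rfl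
  have perm : ∀ (A : Fin n → Ω) (σ : Equiv.Perm (Fin n)), dG (A ∘ σ) = dG A := by
    intro A σ
    refine le_antisymm (key A σ) ?_
    have h1 := key (A ∘ σ) σ⁻¹
    have h2 : (A ∘ σ) ∘ ⇑σ⁻¹ = A := by
      funext i; simp
    rwa [h2] at h1
  -- the all-identity assignment is feasible and gives the diagonal cost
  have identPSD : (Matrix.of fun p q : Fin n × Fin m =>
      ((fun (_ _ : Fin n) => (1 : Matrix (Fin m) (Fin m) ℝ)) p.1 q.1) p.2 q.2).PosSemidef := by
    have heq : (Matrix.of fun p q : Fin n × Fin m =>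
        ((fun (_ _ : Fin n) => (1 : Matrix (Fin m) (Fin m) ℝ)) p.1 q.1) p.2 q.2)
        = Matrix.of fun p q : Fin n × Fin m =>
          (if p.1 = q.1 then (1 : Matrix (Fin m) (Fin m) ℝ)
            else (fun _ : Fin n => (1 : Matrix (Fin m) (Fin m) ℝ)) p.1 *
              ((fun _ : Fin n => (1 : Matrix (Fin m) (Fin m) ℝ)) q.1)ᵀ) p.2 q.2 := by
      ext p q
      by_cases h : p.1 = q.1 <;> simp [h]
    rw [heq]
    exact block_psd (fun _ : Fin n => (1 : Matrix (Fin m) (Fin m) ℝ)) (fun _ => hnorm _ hI)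
  -- Part 3
  have diag_zero : ∀ A : Ω, dG (fun _ => A) = 0 := by
    intro A
    refine le_antisymm ((hdG _).2 ⟨fun _ _ => 1, fun _ _ => hI, fun _ => rfl, identPSD, by
      simp [hs_id]⟩) (nonneg _)
  refine ⟨nonneg, perm, diag_zero, ?_⟩
  -- Part 4
  intro A A'
  by_cases hn : n ≤ 1
  · have hle : dG A ≤ 0 := by
      refine (hdG A).2 ⟨fun _ _ => 1, fun _ _ => hI, fun _ => rfl, identPSD, ?_⟩
      have : ∀ i j : Fin n, s (A i) (A j) 1 = 0 := by
        intro i j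
        have : i = j := by
          ext
          omega
        rw [this, hs_id]
      simp [this]
    have : (0:ℝ) ≤ ∑ ℓ : Fin n, dG (Function.update A ℓ A') :=
      Finset.sum_nonneg fun ℓ _ => nonneg _
    linarith
  push_neg at hn
  choose P hP𝓟 hPdiag hPpsd hPcost using fun ℓ : Fin n => (hdG (Function.update A ℓ A')).1
  have hPsymm : ∀ (ℓ i j : Fin n), (P ℓ i j)ᵀ = P ℓ j i := by
    intro ℓ i j
    ext k l
    have h := congrFun (congrFun (hPpsd ℓ).1 ((j, k) : Fin n × Fin m)) ((i, l) : Fin n × Fin m)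
    simpa using h
  -- choose best hub for each i
  have hex : ∀ i : Fin n, ∃ ℓ ∈ Finset.univ.erase i,
      ∀ ℓ' ∈ Finset.univ.erase i, s (A i) A' (P ℓ i ℓ) ≤ s (A i) A' (P ℓ' i ℓ') := by
    intro i
    apply Finset.exists_min_image
    rw [← Finset.card_pos, Finset.card_erase_of_mem (Finset.mem_univ i), Finset.card_univ,
      Fintype.card_fin]
    omega
  choose L hLmem hLmin using hex
  have hLne : ∀ i, L i ≠ i := fun i => Finset.ne_of_mem_erase (hLmem i)
  set t : Fin n → ℝ := fun i => s (A i) A' (P (L i) i (L i)) with ht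
  have htnn : ∀ i, 0 ≤ t i := fun i => hs_nonneg _ _ _
  set Γ : Fin n → Matrix (Fin m) (Fin m) ℝ := fun i => P (L i) i (L i) with hΓdef
  have hΓ𝓟 : ∀ i, Γ i ∈ 𝓟 := fun i => hP𝓟 _ _ _
  -- lower bound on t by any other hub
  have htle : ∀ i ℓ, ℓ ≠ i → t i ≤ s (A i) A' (P ℓ i ℓ) := by
    intro i ℓ h
    exact hLmin i ℓ (Finset.mem_erase.2 ⟨h, Finset.mem_univ ℓ⟩)
  -- LHS bound
  set Q : Fin n → Fin n → Matrix (Fin m) (Fin m) ℝ :=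
    fun i j => if i = j then 1 else Γ i * (Γ j)ᵀ with hQ
  have hQx : (1 / 2) * (∑ i : Fin n, ∑ j : Fin n, s (A i) (A j) (Q i j))
      ∈ {x : ℝ | ∃ P : Fin n → Fin n → Matrix (Fin m) (Fin m) ℝ,
        (∀ i j, P i j ∈ 𝓟) ∧ (∀ i, P i i = 1) ∧
        (Matrix.of fun p q : Fin n × Fin m => P p.1 q.1 p.2 q.2).PosSemidef ∧
        x = (1 / 2) * ∑ i : Fin n, ∑ j : Fin n, s (A i) (A j) (P i j)} := by
    refine ⟨Q, ?_, ?_, ?_, rfl⟩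
    · intro i j
      rw [hQ]
      dsimp only
      split_ifs
      · exact hI
      · exact hmul _ (hΓ𝓟 i) _ (htrans _ (hΓ𝓟 j))
    · intro i
      simp [hQ]
    · exact block_psd Γ (fun i => hnorm _ (hΓ𝓟 i))
  have hd1 : dG A ≤ (1 / 2) * (∑ i : Fin n, ∑ j : Fin n, s (A i) (A j) (Q i j)) := (hdG A).2 hQx
  have hQle : ∀ i j : Fin n, s (A i) (A j) (Q i j) ≤
      (if i = j then 0 else t i) + (if i = j then 0 else t j) := by
    intro i j
    by_cases h : i = j
    · subst h
      simp [hQ, hs_id (A i)]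
    · rw [hQ]
      simp only [if_neg h]
      have h1 := hs_tri (A i) A' (A j) (Γ i) ((Γ j)ᵀ)
      have h2 : s A' (A j) ((Γ j)ᵀ) = t j := by
        rw [hs_symm A' (A j), Matrix.transpose_transpose]
      have h3 : s (A i) A' (Γ i) = t i := rfl
      linarith
  have sum_if : ∀ c : Fin n → ℝ, ∀ i : Fin n,
      (∑ j : Fin n, if i = j then 0 else c j) = (∑ j : Fin n, c j) - c i := by
    intro c i
    have : ∀ j : Fin n, (if i = j then (0:ℝ) else c j) = c j - (if i = j then c j else 0) := by
      intro j; split_ifs <;> ring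
    rw [Finset.sum_congr rfl fun j _ => this j, Finset.sum_sub_distrib, Finset.sum_ite_eq]
    simp
  have hLHS : dG A ≤ ((n:ℝ) - 1) * ∑ i : Fin n, t i := by
    have h1 : (∑ i : Fin n, ∑ j : Fin n, s (A i) (A j) (Q i j)) ≤
        ∑ i : Fin n, ∑ j : Fin n, ((if i = j then 0 else t i) + (if i = j then 0 else t j)) :=
      Finset.sum_le_sum fun i _ => Finset.sum_le_sum fun j _ => hQle i j
    have h2 : (∑ i : Fin n, ∑ j : Fin n, ((if i = j then 0 else t i) + (if i = j then 0 else t j)))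
        = 2 * ((n:ℝ) - 1) * ∑ i : Fin n, t i := by
      have inner : ∀ i : Fin n,
          (∑ j : Fin n, ((if i = j then 0 else t i) + (if i = j then 0 else t j)))
          = ((n:ℝ) - 1) * t i + ((∑ j : Fin n, t j) - t i) := by
        intro i
        rw [Finset.sum_add_distrib, sum_if t i, sum_if (fun _ => t i) i, Finset.sum_const,
          Finset.card_univ, Fintype.card_fin]
        push_cast
        ring
      rw [Finset.sum_congr rfl fun i _ => inner i, Finset.sum_add_distrib,
        Finset.sum_sub_distrib, ← Finset.mul_sum, Finset.sum_const, Finset.card_univ,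
        Fintype.card_fin]
      push_cast
      ring
    calc dG A ≤ _ := hd1
      _ ≤ (1/2) * (2 * ((n:ℝ) - 1) * ∑ i : Fin n, t i) := by
          rw [← h2]; linarith
      _ = ((n:ℝ) - 1) * ∑ i : Fin n, t i := by ring
  -- RHS bound
  have hRHS : ∀ ℓ : Fin n,
      (∑ i : Fin n, if i = ℓ then 0 else t i) ≤ dG (Function.update A ℓ A') := by
    intro ℓ
    rw [hPcost ℓ]
    have hterm : ∀ i j : Fin n,
        (if j = ℓ ∧ i ≠ ℓ then t i else 0) + (if i = ℓ ∧ j ≠ ℓ then t j else 0) ≤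
        s (Function.update A ℓ A' i) (Function.update A ℓ A' j) (P ℓ i j) := by
      intro i j
      by_cases hi : i = ℓ <;> by_cases hj : j = ℓ
      · rw [if_neg (fun h => h.2 hi), if_neg (fun h => h.2 hj)]
        simpa using hs_nonneg _ _ _
      · -- i = ℓ, j ≠ ℓ
        rw [if_neg (fun h => hj h.1), if_pos ⟨hi, hj⟩, hi, Function.update_self,
          Function.update_of_ne hj]
        have e1 : s A' (A j) (P ℓ ℓ j) = s (A j) A' (P ℓ j ℓ) := by
          rw [hs_symm A' (A j), hPsymm]
        rw [e1]
        linarith [htle j ℓ (fun h => hj h.symm)]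
      · -- i ≠ ℓ, j = ℓ
        rw [if_pos ⟨hj, hi⟩, if_neg (fun h => hi h.1), hj, Function.update_self,
          Function.update_of_ne hi]
        linarith [htle i ℓ (fun h => hi h.symm)]
      · rw [if_neg (fun h => hj h.1), if_neg (fun h => hi h.1)]
        simpa using hs_nonneg _ _ _
    have hsum : (∑ i : Fin n, ∑ j : Fin n,
        ((if j = ℓ ∧ i ≠ ℓ then t i else 0) + (if i = ℓ ∧ j ≠ ℓ then t j else 0)))
        = 2 * ∑ i : Fin n, (if i = ℓ then 0 else t i) := by
      rw [Finset.sum_congr rfl (fun i (_ : i ∈ Finset.univ) => Finset.sum_add_distrib),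
        Finset.sum_add_distrib]
      have e1 : ∀ i : Fin n, (∑ j : Fin n, if j = ℓ ∧ i ≠ ℓ then t i else 0)
          = (if i = ℓ then 0 else t i) := by
        intro i
        have : ∀ j : Fin n, (if j = ℓ ∧ i ≠ ℓ then t i else 0)
            = (if j = ℓ then (if i = ℓ then 0 else t i) else 0) := by
          intro j
          by_cases h1 : j = ℓ <;> by_cases h2 : i = ℓ <;> simp [h1, h2]
        rw [Finset.sum_congr rfl fun j _ => this j, Finset.sum_ite_eq']
        simp
      have e2 : ∀ i : Fin n, (∑ j : Fin n, if i = ℓ ∧ j ≠ ℓ then t j else 0)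
          = (if i = ℓ then (∑ j : Fin n, if j = ℓ then 0 else t j) else 0) := by
        intro i
        by_cases h2 : i = ℓ
        · simp only [h2, true_and, if_true]
          refine Finset.sum_congr rfl fun j _ => ?_
          by_cases h1 : j = ℓ <;> simp [h1]
        · simp [h2]
      rw [Finset.sum_congr rfl fun i (_ : i ∈ Finset.univ) => e1 i,
        Finset.sum_congr rfl fun i (_ : i ∈ Finset.univ) => e2 i, Finset.sum_ite_eq']
      simp only [Finset.mem_univ, if_true]
      ring
    have hmain : (∑ i : Fin n, ∑ j : Fin n,
        ((if j = ℓ ∧ i ≠ ℓ then t i else 0) + (if i = ℓ ∧ j ≠ ℓ then t j else 0)))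
        ≤ ∑ i : Fin n, ∑ j : Fin n,
          s (Function.update A ℓ A' i) (Function.update A ℓ A' j) (P ℓ i j) :=
      Finset.sum_le_sum fun i _ => Finset.sum_le_sum fun j _ => hterm i j
    rw [hsum] at hmain
    linarith
  have hfinal : ((n:ℝ) - 1) * ∑ i : Fin n, t i ≤ ∑ ℓ : Fin n, dG (Function.update A ℓ A') := by
    have h1 : (∑ ℓ : Fin n, ∑ i : Fin n, if i = ℓ then 0 else t i)
        ≤ ∑ ℓ : Fin n, dG (Function.update A ℓ A') :=
      Finset.sum_le_sum fun ℓ _ => hRHS ℓ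
    have h2 : (∑ ℓ : Fin n, ∑ i : Fin n, if i = ℓ then 0 else t i)
        = ((n:ℝ) - 1) * ∑ i : Fin n, t i := by
      rw [Finset.sum_comm]
      have e1 : ∀ i : Fin n, (∑ ℓ : Fin n, if i = ℓ then 0 else t i)
          = ((∑ ℓ : Fin n, t i) - t i) := fun i => sum_if (fun _ => t i) i
      rw [Finset.sum_congr rfl fun i (_ : i ∈ Finset.univ) => e1 i]
      simp only [Finset.sum_const, Finset.card_univ, Fintype.card_fin, nsmul_eq_mul]
      rw [Finset.sum_sub_distrib, ← Finset.mul_sum]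
      ring
    linarith
  linarith
end
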